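/- arXiv:2209.01804 — 2 statements merged into one kernel-verified Lean document; each statement's English description precedes it below -/
import Mathlib

section
/- Let X be a complex Banach space, θ₀, θ₁ ∈ ℕ, θ := lcm(θ₀, θ₁), and for each n ∈ ℕ₀ and t ∈ ℤ let F_t^n : U_t → X be maps on open sets U_t ⊆ X with F_{t+θ₀}^n = F_t^n and U_{t+θ₀} = U_t. Assume: (i) each F_t^n is continuously Fréchet differentiable; (ii) for every 0 ≤ t < θ₀ the derivatives DF_t^n : U_t → L(X), n ∈ ℕ, are uniformly continuous on bounded subsets of U_t uniformly in n (for every bounded B ⊆ U_t and ε > 0 there is δ > 0 with ‖DF_t^n(u) − DF_t^n(ū)‖ ≤ ε whenever u, ū ∈ B, ‖u − ū‖ < δ, n ∈ ℕ), the family {DF_t^n}_{n∈ℕ} is equicontinuous, and for every n ∈ ℕ there exists 0 ≤ t < θ₀ such that DF_t^n(u) is a compact operator for every u ∈ U_t. Let φ⁰ = (φ_t^0)_{t∈ℤ} be a θ₁-periodic solution of u_{t+1} = F_t^0(u_t) which is weakly hyperbolic, i.e. 1 ∉ σ(Ξ_θ^0) with Ξ_θ^0 := DF_{θ−1}^0(φ_{θ−1}^0)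 ∘ ⋯ ∘ DF_0^0(φ_0^0). Suppose there is Γ₀ : [0,∞) → [0,∞) with lim_{ϱ↘0} Γ₀(ϱ) = 0 such that ‖F_t^n(φ_t^0) − F_t^0(φ_t^0)‖ ≤ Γ₀(1/n) and lim_{n→∞} ‖DF_t^n(φ_t^0) − DF_t^0(φ_t^0)‖_{L(X)} = 0 for all 0 ≤ t < θ. Then there exist ρ₀ > 0, K₀ ≥ 0 and N₀ ∈ ℕ such that for every n ≥ N₀ the equation u_{t+1} = F_t^n(u_t) has a θ-periodic solution φⁿ = (φ_t^n)_{t∈ℤ}, unique among θ-periodic solutions with sup_{t∈ℤ} ‖φ_t^n − φ_t^0‖ ≤ ρ₀, and this solution satisfies sup_{t∈ℤ} ‖φ_t^n − φ_t^0‖ ≤ K₀ Γ₀(1/n); moreover φⁿ is weakly hyperbolic, i.e. 1 ∉ σ(DF_{θ−1}^n(φ_{θ−1}^n) ∘ ⋯ ∘ DF_0^n(φ_0^n)). -/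
open Filter Topology

/-- The period operator `Ξ_θ = A_{θ−1} ∘ ⋯ ∘ A₀` built from an integer-indexed
operator sequence. -/
noncomputable def prodOp {X : Type*} [NormedAddCommGroup X] [NormedSpace ℂ X]
    (A : ℤ → X →L[ℂ] X) : ℕ → (X →L[ℂ] X)
  | 0 => ContinuousLinearMap.id ℂ X
  | (j + 1) => (A j).comp (prodOp A j)

/-- forward iterates of a nonautonomous map starting at time 0 -/
def iterF {X : Type*} (F : ℤ → X → X) : ℕ → X → X
  | 0 => fun x => x
  | (j + 1) => fun x => F j (iterF F j x)

section Helpers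
variable {X : Type*} [NormedAddCommGroup X] [NormedSpace ℂ X]

lemma prodOp_congr (A B : ℤ → X →L[ℂ] X) (m : ℕ) (h : ∀ j : ℕ, j < m → A j = B j) :
    prodOp A m = prodOp B m := by
  induction m with
  | zero => rfl
  | succ m ih =>
    simp only [prodOp, h m (Nat.lt_succ_self m),
      ih (fun j hj => h j (hj.trans (Nat.lt_succ_self m)))]

lemma prodOp_norm_le (A : ℤ → X →L[ℂ] X) (m : ℕ) (L : ℝ) (hL : 1 ≤ L)
    (h : ∀ j : ℕ, j < m → ‖A j‖ ≤ L) : ‖prodOp A m‖ ≤ L ^ m := by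
  induction m with
  | zero => simpa [prodOp] using ContinuousLinearMap.norm_id_le
  | succ m ih =>
    have h1 := ih (fun j hj => h j (hj.trans (Nat.lt_succ_self m)))
    calc ‖prodOp A (m+1)‖ ≤ ‖A m‖ * ‖prodOp A m‖ := ContinuousLinearMap.opNorm_comp_le _ _
    _ ≤ L * L ^ m := by
        apply mul_le_mul (h m (Nat.lt_succ_self m)) h1 (norm_nonneg _)
        linarith
    _ = L ^ (m+1) := by ring

lemma prodOp_sub_norm (A B : ℤ → X →L[ℂ] X) (m : ℕ) (L ε : ℝ) (hL : 1 ≤ L) (hε : 0 ≤ ε)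
    (hA : ∀ j : ℕ, j < m → ‖A j‖ ≤ L) (hB : ∀ j : ℕ, j < m → ‖B j‖ ≤ L)
    (hd : ∀ j : ℕ, j < m → ‖A j - B j‖ ≤ ε) :
    ‖prodOp A m - prodOp B m‖ ≤ m * L ^ m * ε := by
  induction m with
  | zero => simp [prodOp]
  | succ m ih =>
    have hA' : ∀ j : ℕ, j < m → ‖A j‖ ≤ L := fun j hj => hA j (Nat.lt_succ_of_lt hj)
    have hB' : ∀ j : ℕ, j < m → ‖B j‖ ≤ L := fun j hj => hB j (Nat.lt_succ_of_lt hj)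
    have hd' : ∀ j : ℕ, j < m → ‖A j - B j‖ ≤ ε := fun j hj => hd j (Nat.lt_succ_of_lt hj)
    have ih' := ih hA' hB' hd'
    have hPB : ‖prodOp B m‖ ≤ L ^ m := prodOp_norm_le B m L hL hB'
    have hLm : (0:ℝ) < L ^ m := pow_pos (lt_of_lt_of_le one_pos hL) m
    have key : prodOp A (m+1) - prodOp B (m+1)
        = (A m).comp (prodOp A m - prodOp B m) + (A m - B m).comp (prodOp B m) := by
      simp only [prodOp]
      rw [ContinuousLinearMap.comp_sub, ContinuousLinearMap.sub_comp]
      abel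
    calc ‖prodOp A (m+1) - prodOp B (m+1)‖
        ≤ ‖(A m).comp (prodOp A m - prodOp B m)‖ + ‖(A m - B m).comp (prodOp B m)‖ := by
          rw [key]; exact norm_add_le _ _
      _ ≤ ‖A m‖ * ‖prodOp A m - prodOp B m‖ + ‖A m - B m‖ * ‖prodOp B m‖ := by
          gcongr <;> exact ContinuousLinearMap.opNorm_comp_le _ _
      _ ≤ L * (m * L ^ m * ε) + ε * L ^ m := by
          have t1 : ‖A (m:ℤ)‖ * ‖prodOp A m - prodOp B m‖ ≤ L * (m * L ^ m * ε) :=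
            mul_le_mul (hA m (Nat.lt_succ_self m)) ih' (norm_nonneg _)
              (le_trans zero_le_one hL)
          have t2 : ‖A (m:ℤ) - B (m:ℤ)‖ * ‖prodOp B m‖ ≤ ε * L ^ m :=
            mul_le_mul (hd m (Nat.lt_succ_self m)) hPB (norm_nonneg _) hε
          linarith
      _ ≤ (m + 1 : ℕ) * L ^ (m+1) * ε := by
          push_cast
          have h1 : L * (m * L ^ m * ε) = m * (L * L^m) * ε := by ring
          have h2 : ε * L ^ m ≤ ε * (L * L ^ m) :=
            mul_le_mul_of_nonneg_left (le_mul_of_one_le_left hLm.le hL) hε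
          have h3 : ((m:ℝ) + 1) * L ^ (m+1) * ε = m * (L * L^m) * ε + ε * (L * L^m) := by
            ring
          rw [h3, h1]
          have h4 : (0:ℝ) ≤ (m:ℝ) * (L * L^m) * ε := by positivity
          linarith
  
lemma int_periodic {α : Sort*} {f : ℤ → α} {p : ℕ} (hp : 0 < p)
    (h : ∀ t : ℤ, f (t + p) = f t) {s t : ℤ} (hst : s % p = t % p) : f s = f t := by
  have key : ∀ (k x : ℤ), f (x + k * p) = f x := by
    intro k
    induction k using Int.induction_on with
    | zero => simp
    | succ k ih =>
      intro x
      have h1 := h (x + k * p)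
      have h2 : x + (k + 1) * p = x + k * p + p := by ring
      rw [h2, h1, ih]
    | pred k ih =>
      intro x
      have h1 := h (x + (-(k:ℤ) - 1) * p)
      have h2 : x + (-(k:ℤ) - 1) * p + p = x + -(k:ℤ) * p := by ring
      rw [h2] at h1
      rw [← h1]; exact ih x
  have base : ∀ u : ℤ, f u = f (u % p) := by
    intro u
    conv_lhs => rw [← Int.emod_add_mul_ediv u ↑p, mul_comm]
    exact key _ _
  rw [base s, base t, hst]

end Helpers

set_option maxHeartbeats 2000000 in
/-- Theorem 2.2: persistence of weakly hyperbolic periodic solutions. Under the stated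
smoothness, uniform continuity, equicontinuity and compactness assumptions on the
`θ₀`-periodic right-hand sides `F_t^n` and the consistency assumptions
`‖F_t^n(φ_t^0) − F_t^0(φ_t^0)‖ ≤ Γ₀(1/n)`,
`‖DF_t^n(φ_t^0) − DF_t^0(φ_t^0)‖ → 0`, every weakly hyperbolic `θ₁`-periodic solution
`φ⁰` of the unperturbed equation persists: for every sufficiently large `n` there is a
`θ`-periodic solution `φⁿ` (θ = lcm(θ₀,θ₁)), unique in a `ρ₀`-neighborhood of `φ⁰`,
weakly hyperbolic, and satisfying `sup_t ‖φ_t^n − φ_t^0‖ ≤ K₀ Γ₀(1/n)`. -/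
theorem perturbed_periodic_solutions
    {X : Type*} [NormedAddCommGroup X] [NormedSpace ℂ X] [CompleteSpace X]
    (θ₀ θ₁ θ : ℕ) (hθ₀ : 0 < θ₀) (hθ₁ : 0 < θ₁) (hθ : θ = Nat.lcm θ₀ θ₁)
    (U : ℤ → Set X) (hUopen : ∀ t, IsOpen (U t)) (hUper : ∀ t : ℤ, U (t + θ₀) = U t)
    (F : ℕ → ℤ → X → X) (hFper : ∀ (n : ℕ) (t : ℤ), F n (t + θ₀) = F n t)
    -- (i) every F_t^n is continuously differentiable on U_t
    (hC1 : ∀ (n : ℕ) (t : ℤ), ContDiffOn ℂ 1 (F n t) (U t))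
    -- (ii) DF_t^n uniformly continuous on bounded sets, uniformly in n ∈ ℕ
    (hUC : ∀ t : ℤ, 0 ≤ t → t < θ₀ → ∀ B : Set X, B ⊆ U t → Bornology.IsBounded B →
      ∀ ε : ℝ, 0 < ε → ∃ δ : ℝ, 0 < δ ∧ ∀ n : ℕ, 1 ≤ n → ∀ u ∈ B, ∀ v ∈ B,
        ‖u - v‖ < δ → ‖fderiv ℂ (F n t) u - fderiv ℂ (F n t) v‖ ≤ ε)
    -- (ii) the family {DF_t^n}_{n∈ℕ} is equicontinuous
    (hequi : ∀ t : ℤ, 0 ≤ t → t < θ₀ → ∀ u ∈ U t, ∀ ε : ℝ, 0 < ε →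
      ∃ δ : ℝ, 0 < δ ∧ ∀ n : ℕ, 1 ≤ n → ∀ v ∈ U t, ‖v - u‖ < δ →
        ‖fderiv ℂ (F n t) v - fderiv ℂ (F n t) u‖ ≤ ε)
    -- (ii) for every n there is a time with compact-operator-valued derivative
    (hcomp : ∀ n : ℕ, 1 ≤ n → ∃ t : ℤ, 0 ≤ t ∧ t < θ₀ ∧ ∀ u ∈ U t,
      IsCompactOperator (fderiv ℂ (F n t) u))
    -- φ⁰ is a θ₁-periodic solution of the unperturbed equation
    (φ0 : ℤ → X) (hmem : ∀ t : ℤ, φ0 t ∈ U t)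
    (hsol : ∀ t : ℤ, φ0 (t + 1) = F 0 t (φ0 t))
    (hper : ∀ t : ℤ, φ0 (t + θ₁) = φ0 t)
    -- weak hyperbolicity: 1 ∉ σ(Ξ_θ^0)
    (hweak : (1 : ℂ) ∉ spectrum ℂ (prodOp (fun t => fderiv ℂ (F 0 t) (φ0 t)) θ))
    -- consistency assumptions (2.7) and (2.8)
    (Γ₀ : ℝ → ℝ) (hΓ₀nn : ∀ ϱ : ℝ, 0 ≤ Γ₀ ϱ)
    (hΓ₀lim : Tendsto Γ₀ (nhdsWithin 0 (Set.Ioi 0)) (nhds 0))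
    (hFconv : ∀ t : ℤ, 0 ≤ t → t < θ → ∀ n : ℕ, 1 ≤ n →
      ‖F n t (φ0 t) - F 0 t (φ0 t)‖ ≤ Γ₀ (1 / (n : ℝ)))
    (hDconv : ∀ t : ℤ, 0 ≤ t → t < θ →
      Tendsto (fun n : ℕ => ‖fderiv ℂ (F n t) (φ0 t) - fderiv ℂ (F 0 t) (φ0 t)‖)
        atTop (nhds 0)) :
    ∃ ρ₀ : ℝ, 0 < ρ₀ ∧ ∃ K₀ : ℝ, 0 ≤ K₀ ∧ ∃ N₀ : ℕ, 1 ≤ N₀ ∧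
      ∀ n : ℕ, N₀ ≤ n → ∃ φn : ℤ → X,
        -- φⁿ is a θ-periodic solution of the n-th equation in B_{ρ₀}(φ⁰)
        (∀ t : ℤ, φn t ∈ U t) ∧
        (∀ t : ℤ, φn (t + 1) = F n t (φn t)) ∧
        (∀ t : ℤ, φn (t + θ) = φn t) ∧
        (∀ t : ℤ, ‖φn t - φ0 t‖ ≤ ρ₀) ∧
        -- uniqueness among θ-periodic solutions in B_{ρ₀}(φ⁰)
        (∀ ψ : ℤ → X, (∀ t : ℤ, ψ t ∈ U t) → (∀ t : ℤ, ψ (t + 1) = F n t (ψ t)) →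
          (∀ t : ℤ, ψ (t + θ) = ψ t) → (∀ t : ℤ, ‖ψ t - φ0 t‖ ≤ ρ₀) → ψ = φn) ∧
        -- convergence estimate (2.9)
        (∀ t : ℤ, ‖φn t - φ0 t‖ ≤ K₀ * Γ₀ (1 / (n : ℝ))) ∧
        -- φⁿ is weakly hyperbolic
        (1 : ℂ) ∉ spectrum ℂ (prodOp (fun t => fderiv ℂ (F n t) (φn t)) θ) := by
  clear hUC hcomp
  -- ## basic arithmetic on periods
  have hθpos : 0 < θ := hθ ▸ Nat.pos_of_ne_zero (Nat.lcm_ne_zero hθ₀.ne' hθ₁.ne')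
  have hθ0dvd : (θ₀ : ℤ) ∣ (θ : ℤ) := Int.natCast_dvd_natCast.mpr (hθ ▸ Nat.dvd_lcm_left θ₀ θ₁)
  have hθ1dvd : (θ₁ : ℤ) ∣ (θ : ℤ) := Int.natCast_dvd_natCast.mpr (hθ ▸ Nat.dvd_lcm_right θ₀ θ₁)
  have Uper : ∀ s t : ℤ, s % θ₀ = t % θ₀ → U s = U t := fun s t h => int_periodic hθ₀ hUper h
  have Fper' : ∀ (n : ℕ) (s t : ℤ), s % θ₀ = t % θ₀ → F n s = F n t :=
    fun n s t h => int_periodic hθ₀ (hFper n) h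
  have φ0per' : ∀ s t : ℤ, s % θ₁ = t % θ₁ → φ0 s = φ0 t := fun s t h => int_periodic hθ₁ hper h
  have modθ₀ : ∀ t : ℤ, (t % θ) % θ₀ = t % θ₀ := fun t => Int.emod_emod_of_dvd t hθ0dvd
  have modθ₁ : ∀ t : ℤ, (t % θ) % θ₁ = t % θ₁ := fun t => Int.emod_emod_of_dvd t hθ1dvd
  have hUmod : ∀ t : ℤ, U t = U (t % θ) := fun t => Uper t _ (modθ₀ t).symm
  have hφ0mod : ∀ t : ℤ, φ0 t = φ0 (t % θ) := fun t => φ0per' t _ (modθ₁ t).symm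
  have hφ0θ : φ0 (θ : ℤ) = φ0 0 := by
    apply φ0per'
    obtain ⟨c, hc⟩ := hθ1dvd
    rw [hc, Int.mul_emod_right, Int.zero_emod]
  -- ## differentiability
  have hdiffAt : ∀ (m : ℕ) (t : ℤ), ∀ x ∈ U t, DifferentiableAt ℂ (F m t) x := fun m t x hx =>
    ((hC1 m t).differentiableOn one_ne_zero).differentiableAt ((hUopen t).mem_nhds hx)
  -- ## operators
  set A0 : ℤ → X →L[ℂ] X := fun t => fderiv ℂ (F 0 t) (φ0 t) with hA0
  set Ξ : X →L[ℂ] X := prodOp A0 θ with hΞ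
  have hunit : IsUnit ((1 : X →L[ℂ] X) - Ξ) := by
    have h := spectrum.notMem_iff.mp hweak
    rwa [map_one] at h
  obtain ⟨T, hT⟩ := hunit
  set Tn : X →L[ℂ] X := ((T⁻¹ : (X →L[ℂ] X)ˣ) : X →L[ℂ] X) with hTn
  set κ : ℝ := ‖Tn‖ + 1 with hκdef
  have hκ1 : 1 ≤ κ := le_add_of_nonneg_left (norm_nonneg _)
  have hκ0 : 0 < κ := lt_of_lt_of_le one_pos hκ1
  -- ## the constant L
  have hrangene : (Finset.range θ).Nonempty := ⟨0, Finset.mem_range.mpr hθpos⟩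
  set L : ℝ := max 1 ((Finset.range θ).sup' hrangene (fun j => ‖A0 (j : ℤ)‖ + 1)) with hLdef
  have hL1 : 1 ≤ L := le_max_left _ _
  have hL0 : 0 < L := lt_of_lt_of_le one_pos hL1
  have hLA : ∀ j : ℕ, j < θ → ‖A0 (j : ℤ)‖ + 1 ≤ L := fun j hj =>
    le_trans (Finset.le_sup' (f := fun j : ℕ => ‖A0 (j:ℤ)‖ + 1) (Finset.mem_range.mpr hj))
      (le_max_right _ _)
  set C : ℝ := (L + 1) ^ θ with hCdef
  have hCge : ∀ j : ℕ, j ≤ θ → (L + 1) ^ j ≤ C := fun j hj =>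
    pow_le_pow_right₀ (by linarith) hj
  have hC1' : 1 ≤ C := by
    calc (1:ℝ) = (L+1)^0 := by norm_num
    _ ≤ C := hCge 0 (Nat.zero_le θ)
  have hC0 : 0 < C := lt_of_lt_of_le one_pos hC1'
  set LP : ℝ := L ^ θ with hLPdef
  have hLP0 : 0 < LP := pow_pos hL0 θ
  set ε' : ℝ := min (1/2) (1 / (2 * κ * (θ + 1) * LP)) with hε'def
  have hε'pos : 0 < ε' := lt_min (by norm_num) (by positivity)
  have hε'le : ε' ≤ 1/2 := min_le_left _ _
  have hspec : κ * ((θ : ℝ) * LP * ε') ≤ 1/2 := by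
    have h1 : ε' ≤ 1 / (2 * κ * (θ + 1) * LP) := min_le_right _ _
    have h2 : κ * ((θ : ℝ) * LP * (1 / (2 * κ * (θ + 1) * LP))) ≤ 1/2 := by
      rw [mul_one_div, ← mul_div_assoc, div_le_div_iff₀ (by positivity) (by norm_num)]
      nlinarith [mul_pos hκ0 hLP0, Nat.cast_nonneg (α := ℝ) θ, hLP0, hκ0]
    calc κ * ((θ : ℝ) * LP * ε') ≤ κ * ((θ : ℝ) * LP * (1 / (2 * κ * (θ + 1) * LP))) := by
          apply mul_le_mul_of_nonneg_left _ hκ0.le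
          apply mul_le_mul_of_nonneg_left h1 (by positivity)
    _ ≤ 1/2 := h2
  -- ## choice of per-time radii δf j
  have hδex : ∀ j : ℕ, ∃ d : ℝ, 0 < d ∧ (j < θ →
      (Metric.closedBall (φ0 (j : ℤ)) d ⊆ U (j : ℤ)) ∧
      (∀ m : ℕ, 1 ≤ m → ∀ v ∈ U (j : ℤ), ‖v - φ0 (j : ℤ)‖ < d →
        ‖fderiv ℂ (F m (j : ℤ)) v - fderiv ℂ (F m (j : ℤ)) (φ0 (j : ℤ))‖ ≤ ε' / 2)) := by
    intro j
    by_cases hj : j < θ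
    · have hmemj : φ0 (j : ℤ) ∈ U (j : ℤ) := hmem _
      obtain ⟨r, hr, hball⟩ := Metric.isOpen_iff.mp (hUopen (j : ℤ)) _ hmemj
      have h0 : (0 : ℤ) ≤ (j : ℤ) % θ₀ := Int.emod_nonneg _ (by exact_mod_cast hθ₀.ne')
      have h1 : (j : ℤ) % θ₀ < θ₀ := Int.emod_lt_of_pos _ (by exact_mod_cast hθ₀)
      have hUeq : U ((j : ℤ) % θ₀) = U (j : ℤ) := Uper _ _ (Int.emod_emod_of_dvd _ dvd_rfl)
      have hFeq : ∀ m : ℕ, F m ((j : ℤ) % θ₀) = F m (j : ℤ) :=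
        fun m => Fper' m _ _ (Int.emod_emod_of_dvd _ dvd_rfl)
      obtain ⟨d, hd, hdprop⟩ := hequi _ h0 h1 (φ0 (j : ℤ)) (by rw [hUeq]; exact hmemj)
        (ε' / 2) (by positivity)
      refine ⟨min (r/2) d, by positivity, fun _ => ⟨?_, ?_⟩⟩
      · refine subset_trans (Metric.closedBall_subset_ball ?_) hball
        calc min (r/2) d ≤ r/2 := min_le_left _ _
        _ < r := by linarith
      · intro m hm v hv hvlt
        have h2 := hdprop m hm v (by rw [hUeq]; exact hv)
          (lt_of_lt_of_le hvlt (min_le_right _ _))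
        rwa [hFeq m] at h2
    · exact ⟨1, one_pos, fun h => absurd h hj⟩
  choose δf hδfpos hδfprop using hδex
  set δ : ℝ := (Finset.range θ).inf' hrangene (fun j => δf j) with hδdef
  have hδpos : 0 < δ := by
    rw [hδdef, Finset.lt_inf'_iff]
    exact fun j _ => hδfpos j
  have hδle : ∀ j : ℕ, j < θ → δ ≤ δf j := fun j hj =>
    Finset.inf'_le _ (Finset.mem_range.mpr hj)
  -- ## the main constants
  set ρ₀ : ℝ := δ / (4 * C) with hρ₀def
  have hρ₀pos : 0 < ρ₀ := by positivity
  have hCρ : C * ρ₀ = δ / 4 := by rw [hρ₀def]; field_simp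
  set K₀ : ℝ := C * (2 * κ * C + 1) with hK₀def
  have hK₀1 : 1 ≤ K₀ := by
    rw [hK₀def]
    nlinarith [mul_nonneg (mul_nonneg hκ0.le hC0.le) hC0.le, hC1']
  have hK₀0 : 0 < K₀ := lt_of_lt_of_le one_pos hK₀1
  set γ : ℝ := ρ₀ / (2 * κ * C * K₀) with hγdef
  have hγpos : 0 < γ := by positivity
  have hγρ : γ ≤ ρ₀ := by
    rw [hγdef]
    apply div_le_self hρ₀pos.le
    have h1 : (1:ℝ)*1 ≤ κ * C := mul_le_mul hκ1 hC1' zero_le_one (by linarith)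
    have h2 : (1:ℝ)*1 ≤ (κ*C)*K₀ := mul_le_mul (by linarith) hK₀1 zero_le_one (by positivity)
    nlinarith [h2]
  -- ## choice of N₀
  have hΓten : Tendsto (fun m : ℕ => Γ₀ (1 / (m : ℝ))) atTop (nhds 0) := by
    apply hΓ₀lim.comp
    rw [tendsto_nhdsWithin_iff]
    constructor
    · exact tendsto_one_div_atTop_nhds_zero_nat
    · filter_upwards [eventually_ge_atTop 1] with m hm
      have : (0:ℝ) < m := by exact_mod_cast hm
      exact Set.mem_Ioi.mpr (by positivity)
  have hev : ∀ᶠ m : ℕ in atTop, Γ₀ (1 / (m : ℝ)) ≤ γ ∧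
      ∀ j ∈ Finset.range θ, ‖fderiv ℂ (F m (j : ℤ)) (φ0 (j : ℤ)) - A0 (j : ℤ)‖ ≤ ε' / 2 := by
    refine (hΓten.eventually (eventually_le_nhds hγpos)).and ?_
    rw [Filter.eventually_all_finset]
    intro j hj
    have hj' := Finset.mem_range.mp hj
    have h := hDconv (j : ℤ) (Int.natCast_nonneg j) (by exact_mod_cast hj')
    have h2 := h.eventually (eventually_le_nhds (show (0:ℝ) < ε'/2 by positivity))
    filter_upwards [h2] with m hm
    calc ‖fderiv ℂ (F m (j:ℤ)) (φ0 (j:ℤ)) - A0 (j:ℤ)‖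
        = ‖fderiv ℂ (F m (j:ℤ)) (φ0 (j:ℤ)) - fderiv ℂ (F 0 (j:ℤ)) (φ0 (j:ℤ))‖ := by rw [hA0]
    _ ≤ ε'/2 := hm
  obtain ⟨N₁, hN₁⟩ := Filter.eventually_atTop.mp hev
  refine ⟨ρ₀, hρ₀pos, K₀, hK₀0.le, max N₁ 1, le_max_right _ _, ?_⟩
  intro n hn
  have hn1 : 1 ≤ n := le_trans (le_max_right _ _) hn
  obtain ⟨hΓγ, hDconv'⟩ := hN₁ n (le_trans (le_max_left _ _) hn)
  set Γ : ℝ := Γ₀ (1 / (n : ℝ)) with hΓdef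
  have hΓ0 : 0 ≤ Γ := hΓ₀nn _
  -- ## per-time estimates for this fixed n
  have hballU : ∀ j : ℕ, j < θ → Metric.closedBall (φ0 (j : ℤ)) (δ/2) ⊆ U (j : ℤ) := by
    intro j hj
    refine subset_trans (Metric.closedBall_subset_closedBall ?_) (hδfprop j hj).1
    linarith [hδle j hj]
  have hDF_close : ∀ j : ℕ, j < θ → ∀ v ∈ Metric.closedBall (φ0 (j : ℤ)) (δ/2),
      ‖fderiv ℂ (F n (j : ℤ)) v - A0 (j : ℤ)‖ ≤ ε' := by
    intro j hj v hv
    have hU : v ∈ U (j : ℤ) := hballU j hj hv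
    have hvn : ‖v - φ0 (j : ℤ)‖ ≤ δ/2 := mem_closedBall_iff_norm.mp hv
    have h1 : ‖fderiv ℂ (F n (j:ℤ)) v - fderiv ℂ (F n (j:ℤ)) (φ0 (j:ℤ))‖ ≤ ε'/2 :=
      (hδfprop j hj).2 n hn1 v hU (lt_of_le_of_lt hvn (by linarith [hδle j hj]))
    have h2 : ‖fderiv ℂ (F n (j:ℤ)) (φ0 (j:ℤ)) - A0 (j:ℤ)‖ ≤ ε'/2 :=
      hDconv' j (Finset.mem_range.mpr hj)
    calc ‖fderiv ℂ (F n (j:ℤ)) v - A0 (j:ℤ)‖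
        = ‖(fderiv ℂ (F n (j:ℤ)) v - fderiv ℂ (F n (j:ℤ)) (φ0 (j:ℤ)))
            + (fderiv ℂ (F n (j:ℤ)) (φ0 (j:ℤ)) - A0 (j:ℤ))‖ := by rw [sub_add_sub_cancel]
    _ ≤ ‖fderiv ℂ (F n (j:ℤ)) v - fderiv ℂ (F n (j:ℤ)) (φ0 (j:ℤ))‖
        + ‖fderiv ℂ (F n (j:ℤ)) (φ0 (j:ℤ)) - A0 (j:ℤ)‖ := norm_add_le _ _
    _ ≤ ε'/2 + ε'/2 := add_le_add h1 h2
    _ = ε' := by ring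
  have hDF_bound : ∀ j : ℕ, j < θ → ∀ v ∈ Metric.closedBall (φ0 (j : ℤ)) (δ/2),
      ‖fderiv ℂ (F n (j : ℤ)) v‖ ≤ L := by
    intro j hj v hv
    have h1 := hDF_close j hj v hv
    have h2 := hLA j hj
    calc ‖fderiv ℂ (F n (j:ℤ)) v‖
        = ‖(fderiv ℂ (F n (j:ℤ)) v - A0 (j:ℤ)) + A0 (j:ℤ)‖ := by rw [sub_add_cancel]
    _ ≤ ‖fderiv ℂ (F n (j:ℤ)) v - A0 (j:ℤ)‖ + ‖A0 (j:ℤ)‖ := norm_add_le _ _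
    _ ≤ L := by linarith [hε'le]
  have hLip : ∀ j : ℕ, j < θ → ∀ u ∈ Metric.closedBall (φ0 (j : ℤ)) (δ/2),
      ∀ v ∈ Metric.closedBall (φ0 (j : ℤ)) (δ/2),
      ‖F n (j : ℤ) u - F n (j : ℤ) v‖ ≤ L * ‖u - v‖ := by
    intro j hj u hu v hv
    exact Convex.norm_image_sub_le_of_norm_hasFDerivWithin_le
      (fun w hw => ((hdiffAt n (j:ℤ) w (hballU j hj hw)).hasFDerivAt).hasFDerivWithinAt)
      (fun w hw => hDF_bound j hj w hw) (convex_closedBall _ _) hv hu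
  -- ## the basic invariant
  have hbnd : ∀ s : ℝ, s ≤ 2 * ρ₀ → ∀ j : ℕ, j ≤ θ → 0 ≤ s → (L+1)^j * s ≤ δ/2 := by
    intro s hs j hj hs0
    have h1 : (L+1)^j * s ≤ C * (2*ρ₀) :=
      mul_le_mul (hCge j hj) hs hs0 hC0.le
    linarith [hCρ]
  have inv : ∀ x : X, ‖x - φ0 0‖ ≤ ρ₀ → ∀ j : ℕ, j ≤ θ →
      ‖iterF (F n) j x - φ0 (j : ℤ)‖ ≤ (L+1)^j * (‖x - φ0 0‖ + Γ) := by
    intro x hx j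
    induction j with
    | zero =>
      intro _
      simp only [Nat.cast_zero, pow_zero, one_mul]
      show ‖x - φ0 0‖ ≤ ‖x - φ0 0‖ + Γ
      linarith
    | succ j ih =>
      intro hj1
      have hj : j < θ := hj1
      have e_j := ih (Nat.le_of_lt hj)
      have hS0 : 0 ≤ ‖x - φ0 0‖ + Γ := by positivity
      have hS2 : ‖x - φ0 0‖ + Γ ≤ 2 * ρ₀ := by linarith [hΓγ, hγρ]
      have hmid : ‖iterF (F n) j x - φ0 (j:ℤ)‖ ≤ δ/2 :=
        le_trans e_j (hbnd _ hS2 j (Nat.le_of_lt hj) hS0)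
      have humem : iterF (F n) j x ∈ Metric.closedBall (φ0 (j:ℤ)) (δ/2) :=
        mem_closedBall_iff_norm.mpr hmid
      have hφmem : φ0 (j:ℤ) ∈ Metric.closedBall (φ0 (j:ℤ)) (δ/2) :=
        Metric.mem_closedBall_self (by positivity)
      have step1 : ‖F n (j:ℤ) (iterF (F n) j x) - F n (j:ℤ) (φ0 (j:ℤ))‖
          ≤ L * ‖iterF (F n) j x - φ0 (j:ℤ)‖ := hLip j hj _ humem _ hφmem
      have step2 : ‖F n (j:ℤ) (φ0 (j:ℤ)) - F 0 (j:ℤ) (φ0 (j:ℤ))‖ ≤ Γ :=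
        hFconv (j:ℤ) (Int.natCast_nonneg j) (by exact_mod_cast hj) n hn1
      have hsolj : φ0 (((j+1 : ℕ)) : ℤ) = F 0 (j:ℤ) (φ0 (j:ℤ)) := by
        push_cast
        exact hsol (j:ℤ)
      have hpow1 : (1:ℝ) ≤ (L+1)^j := one_le_pow₀ (by linarith)
      calc ‖iterF (F n) (j+1) x - φ0 ((j+1 : ℕ) : ℤ)‖
          = ‖F n (j:ℤ) (iterF (F n) j x) - F 0 (j:ℤ) (φ0 (j:ℤ))‖ := by rw [hsolj]; rfl
      _ = ‖(F n (j:ℤ) (iterF (F n) j x) - F n (j:ℤ) (φ0 (j:ℤ)))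
            + (F n (j:ℤ) (φ0 (j:ℤ)) - F 0 (j:ℤ) (φ0 (j:ℤ)))‖ := by rw [sub_add_sub_cancel]
      _ ≤ ‖F n (j:ℤ) (iterF (F n) j x) - F n (j:ℤ) (φ0 (j:ℤ))‖
            + ‖F n (j:ℤ) (φ0 (j:ℤ)) - F 0 (j:ℤ) (φ0 (j:ℤ))‖ := norm_add_le _ _
      _ ≤ L * ((L+1)^j * (‖x - φ0 0‖ + Γ)) + Γ := by
          have := mul_le_mul_of_nonneg_left e_j hL0.le
          linarith
      _ ≤ (L+1)^(j+1) * (‖x - φ0 0‖ + Γ) := by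
          have h1 : (L+1)^(j+1) * (‖x - φ0 0‖ + Γ)
              = L * ((L+1)^j * (‖x - φ0 0‖ + Γ)) + (L+1)^j * (‖x - φ0 0‖ + Γ) := by
            rw [pow_succ]; ring
          have h2 : Γ ≤ (L+1)^j * (‖x - φ0 0‖ + Γ) := by
            have h3 : Γ ≤ ‖x - φ0 0‖ + Γ := le_add_of_nonneg_left (norm_nonneg _)
            have h4 : (‖x - φ0 0‖ + Γ) ≤ (L+1)^j * (‖x - φ0 0‖ + Γ) :=
              le_mul_of_one_le_left hS0 hpow1
            linarith
          linarith
  have hmemball : ∀ x : X, ‖x - φ0 0‖ ≤ ρ₀ → ∀ j : ℕ, j ≤ θ →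
      iterF (F n) j x ∈ Metric.closedBall (φ0 (j : ℤ)) (δ/2) := by
    intro x hx j hj
    refine mem_closedBall_iff_norm.mpr (le_trans (inv x hx j hj) (hbnd _ ?_ j hj ?_))
    · linarith [hΓγ, hγρ]
    · positivity
  -- ## derivative of the iterates
  have hasD : ∀ x : X, ‖x - φ0 0‖ ≤ ρ₀ → ∀ j : ℕ, j ≤ θ →
      HasFDerivAt (iterF (F n) j)
        (prodOp (fun t => fderiv ℂ (F n t) (iterF (F n) t.toNat x)) j) x := by
    intro x hx j hjθ
    induction j with
    | zero =>
      show HasFDerivAt (fun y => y) (ContinuousLinearMap.id ℂ X) x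
      exact hasFDerivAt_id x
    | succ j ih =>
      have hj : j < θ := hjθ
      have ihD := ih (Nat.le_of_lt hj)
      have humem : iterF (F n) j x ∈ U (j:ℤ) :=
        hballU j hj (hmemball x hx j (Nat.le_of_lt hj))
      have hFd : HasFDerivAt (F n (j:ℤ)) (fderiv ℂ (F n (j:ℤ)) (iterF (F n) j x))
          (iterF (F n) j x) := (hdiffAt n _ _ humem).hasFDerivAt
      have hcomp2 := hFd.comp x ihD
      have htn : ((j:ℤ)).toNat = j := Int.toNat_natCast j
      show HasFDerivAt (fun y => F n (j:ℤ) (iterF (F n) j y))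
        ((fderiv ℂ (F n (j:ℤ)) (iterF (F n) ((j:ℤ)).toNat x)).comp
          (prodOp (fun t => fderiv ℂ (F n t) (iterF (F n) t.toNat x)) j)) x
      rw [htn]
      exact hcomp2
  -- ## closeness of the derivative products
  have hDclose : ∀ x : X, ‖x - φ0 0‖ ≤ ρ₀ →
      ‖prodOp (fun t => fderiv ℂ (F n t) (iterF (F n) t.toNat x)) θ - Ξ‖
        ≤ (θ : ℝ) * LP * ε' := by
    intro x hx
    rw [hΞ, hLPdef]
    refine prodOp_sub_norm _ _ θ L ε' hL1 hε'pos.le ?_ ?_ ?_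
    · intro j hj
      have h := hDF_bound j hj _ (hmemball x hx j (Nat.le_of_lt hj))
      simpa [Int.toNat_natCast] using h
    · intro j hj
      linarith [hLA j hj, norm_nonneg (A0 (j:ℤ))]
    · intro j hj
      have h := hDF_close j hj _ (hmemball x hx j (Nat.le_of_lt hj))
      simpa [Int.toNat_natCast] using h
  -- ## the Newton-type map
  set Nmap : X → X := fun x => x - Tn (x - iterF (F n) θ x) with hNmap
  have hNder : ∀ x : X, ‖x - φ0 0‖ ≤ ρ₀ → HasFDerivAt Nmap
      (Tn.comp ((prodOp (fun t => fderiv ℂ (F n t) (iterF (F n) t.toNat x)) θ) - Ξ)) x := by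
    intro x hx
    have hD := hasD x hx θ le_rfl
    set Dθ := prodOp (fun t => fderiv ℂ (F n t) (iterF (F n) t.toNat x)) θ with hDθ
    have h1 : HasFDerivAt (fun y => y - Tn (y - iterF (F n) θ y))
        (ContinuousLinearMap.id ℂ X - Tn.comp (ContinuousLinearMap.id ℂ X - Dθ)) x :=
      (hasFDerivAt_id x).sub ((Tn.hasFDerivAt).comp x ((hasFDerivAt_id x).sub hD))
    have hid : Tn * (Dθ - Ξ) = 1 - Tn * (1 - Dθ) := by
      have hTT : Tn * (T : X →L[ℂ] X) = 1 := by rw [hTn]; exact T.inv_mul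
      have hΞT : Ξ = 1 - (T : X →L[ℂ] X) := by rw [hT]; abel
      rw [hΞT]
      simp only [mul_sub, mul_one, hTT]
      abel
    have hid' : Tn.comp (Dθ - Ξ)
        = ContinuousLinearMap.id ℂ X - Tn.comp (ContinuousLinearMap.id ℂ X - Dθ) := hid
    rw [hid']
    exact h1
  have hNbound : ∀ x : X, ‖x - φ0 0‖ ≤ ρ₀ →
      ‖Tn.comp ((prodOp (fun t => fderiv ℂ (F n t) (iterF (F n) t.toNat x)) θ) - Ξ)‖
        ≤ 1/2 := by
    intro x hx
    calc ‖Tn.comp ((prodOp (fun t => fderiv ℂ (F n t) (iterF (F n) t.toNat x)) θ) - Ξ)‖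
        ≤ ‖Tn‖ * ‖(prodOp (fun t => fderiv ℂ (F n t) (iterF (F n) t.toNat x)) θ) - Ξ‖ :=
          ContinuousLinearMap.opNorm_comp_le _ _
    _ ≤ κ * ((θ : ℝ) * LP * ε') := by
        apply mul_le_mul (by rw [hκdef]; linarith) (hDclose x hx) (norm_nonneg _) hκ0.le
    _ ≤ 1/2 := hspec
  have hcontr : ∀ x ∈ Metric.closedBall (φ0 0) ρ₀, ∀ y ∈ Metric.closedBall (φ0 0) ρ₀,
      ‖Nmap y - Nmap x‖ ≤ 1/2 * ‖y - x‖ := by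
    intro x hx y hy
    exact Convex.norm_image_sub_le_of_norm_hasFDerivWithin_le
      (fun z hz => (hNder z (mem_closedBall_iff_norm.mp hz)).hasFDerivWithinAt)
      (fun z hz => hNbound z (mem_closedBall_iff_norm.mp hz))
      (convex_closedBall _ _) hx hy
  -- ## displacement at the center
  have hc0 : φ0 0 ∈ Metric.closedBall (φ0 0) ρ₀ := Metric.mem_closedBall_self hρ₀pos.le
  have hc0' : ‖φ0 0 - φ0 0‖ ≤ ρ₀ := by simp [hρ₀pos.le]
  have hPc : ‖iterF (F n) θ (φ0 0) - φ0 0‖ ≤ C * Γ := by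
    have h1 := inv (φ0 0) hc0' θ le_rfl
    rw [hφ0θ] at h1
    simp only [sub_self, norm_zero, zero_add] at h1
    rw [hCdef]
    exact h1
  have hNc : ‖Nmap (φ0 0) - φ0 0‖ ≤ κ * (C * Γ) := by
    have h1 : Nmap (φ0 0) - φ0 0 = -(Tn (φ0 0 - iterF (F n) θ (φ0 0))) := by
      show (φ0 0 - Tn (φ0 0 - iterF (F n) θ (φ0 0))) - φ0 0 = _
      abel
    rw [h1, norm_neg]
    calc ‖Tn (φ0 0 - iterF (F n) θ (φ0 0))‖ ≤ ‖Tn‖ * ‖φ0 0 - iterF (F n) θ (φ0 0)‖ :=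
      Tn.le_opNorm _
    _ ≤ κ * (C * Γ) := by
        apply mul_le_mul (by rw [hκdef]; linarith) _ (norm_nonneg _) hκ0.le
        rw [norm_sub_rev]
        exact hPc
  have hκCγ : κ * (C * γ) = ρ₀ / (2 * K₀) := by
    rw [hγdef]; field_simp
  have hκCΓ : κ * (C * Γ) ≤ ρ₀ / 2 := by
    have h1 : κ * (C * Γ) ≤ κ * (C * γ) := by
      apply mul_le_mul_of_nonneg_left _ hκ0.le
      exact mul_le_mul_of_nonneg_left hΓγ hC0.le
    rw [hκCγ] at h1
    have h2 : ρ₀ / (2 * K₀) ≤ ρ₀ / 2 :=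
      div_le_div_of_nonneg_left hρ₀pos.le (by norm_num) (by linarith)
    linarith
  -- ## fixed point of Nmap in the ball
  have hself : ∀ x ∈ Metric.closedBall (φ0 0) ρ₀, Nmap x ∈ Metric.closedBall (φ0 0) ρ₀ := by
    intro x hx
    have h1 := hcontr (φ0 0) hc0 x hx
    have hxn := mem_closedBall_iff_norm.mp hx
    refine mem_closedBall_iff_norm.mpr ?_
    calc ‖Nmap x - φ0 0‖
        = ‖(Nmap x - Nmap (φ0 0)) + (Nmap (φ0 0) - φ0 0)‖ := by rw [sub_add_sub_cancel]
    _ ≤ ‖Nmap x - Nmap (φ0 0)‖ + ‖Nmap (φ0 0) - φ0 0‖ := norm_add_le _ _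
    _ ≤ 1/2 * ‖x - φ0 0‖ + κ * (C * Γ) := add_le_add h1 hNc
    _ ≤ ρ₀ := by linarith [hκCΓ, hxn]
  haveI : Nonempty (Metric.closedBall (φ0 0) ρ₀) := ⟨⟨φ0 0, hc0⟩⟩
  haveI : CompleteSpace (Metric.closedBall (φ0 0) ρ₀) :=
    IsClosed.completeSpace_coe (hs := Metric.isClosed_closedBall)
  set fS : Metric.closedBall (φ0 0) ρ₀ → Metric.closedBall (φ0 0) ρ₀ :=
    fun p => ⟨Nmap p.1, hself p.1 p.2⟩ with hfS
  have hcontrS : ContractingWith (1/2 : NNReal) fS := by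
    refine ⟨by rw [← NNReal.coe_lt_coe]; norm_num, LipschitzWith.of_dist_le_mul fun a b => ?_⟩
    have h := hcontr b.1 b.2 a.1 a.2
    simp only [hfS, Subtype.dist_eq, dist_eq_norm]
    push_cast
    exact h
  set xS : Metric.closedBall (φ0 0) ρ₀ := ContractingWith.fixedPoint fS hcontrS with hxSdef
  set xst : X := (xS : X) with hxstdef
  have hxstmem : ‖xst - φ0 0‖ ≤ ρ₀ := mem_closedBall_iff_norm.mp xS.2
  have hNfix : Nmap xst = xst := congrArg Subtype.val hcontrS.fixedPoint_isFixedPt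
  -- xst is a fixed point of the period map
  have hTTn : ∀ z : X, (T : X →L[ℂ] X) (Tn z) = z := by
    intro z
    have h1 : ((T : X →L[ℂ] X) * Tn) = 1 := by rw [hTn]; exact T.mul_inv
    calc (T : X →L[ℂ] X) (Tn z) = ((T : X →L[ℂ] X) * Tn) z := rfl
    _ = z := by rw [h1]; rfl
  have hPfix : iterF (F n) θ xst = xst := by
    have h1 : xst - Tn (xst - iterF (F n) θ xst) = xst := hNfix
    have h2 : Tn (xst - iterF (F n) θ xst) = 0 := sub_eq_self.mp h1
    have h3 := congrArg (T : X →L[ℂ] X) h2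
    rw [hTTn, map_zero] at h3
    exact (sub_eq_zero.mp h3).symm
  -- quantitative estimate on xst
  have hxstclose : ‖xst - φ0 0‖ ≤ 2 * (κ * (C * Γ)) := by
    have h1 := hcontr (φ0 0) hc0 xst xS.2
    rw [hNfix] at h1
    have h2 : ‖xst - φ0 0‖ ≤ ‖xst - Nmap (φ0 0)‖ + ‖Nmap (φ0 0) - φ0 0‖ := by
      rw [← sub_add_sub_cancel xst (Nmap (φ0 0)) (φ0 0)]
      exact norm_add_le _ _
    linarith [hNc]
  have hK : ∀ j : ℕ, j ≤ θ → ‖iterF (F n) j xst - φ0 (j : ℤ)‖ ≤ K₀ * Γ := by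
    intro j hj
    have h1 := inv xst hxstmem j hj
    have h2 : (L+1)^j * (‖xst - φ0 0‖ + Γ) ≤ C * (2 * (κ * (C * Γ)) + Γ) :=
      mul_le_mul (hCge j hj) (by linarith [hxstclose]) (by positivity) hC0.le
    have h3 : C * (2 * (κ * (C * Γ)) + Γ) = K₀ * Γ := by rw [hK₀def]; ring
    linarith
  have hKργ : K₀ * γ ≤ ρ₀ := by
    have h1 : K₀ * γ = ρ₀ / (2 * κ * C) := by
      rw [hγdef]
      field_simp
    rw [h1]
    apply div_le_self hρ₀pos.le
    nlinarith [mul_le_mul hκ1 hC1' zero_le_one (by linarith : (0:ℝ) ≤ κ)]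
  have hKρ : K₀ * Γ ≤ ρ₀ :=
    le_trans (mul_le_mul_of_nonneg_left hΓγ (by linarith)) hKργ
  -- ## uniqueness of the fixed point in the ball
  have huniq : ∀ y : X, ‖y - φ0 0‖ ≤ ρ₀ → iterF (F n) θ y = y → y = xst := by
    intro y hy hfy
    have hNy : Nmap y = y := by
      show y - Tn (y - iterF (F n) θ y) = y
      rw [hfy, sub_self, map_zero, sub_zero]
    have h1 := hcontr xst xS.2 y (mem_closedBall_iff_norm.mpr hy)
    rw [hNy, hNfix] at h1
    have h2 : ‖y - xst‖ ≤ 0 := by linarith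
    have h3 : ‖y - xst‖ = 0 := le_antisymm h2 (norm_nonneg _)
    exact sub_eq_zero.mp (norm_eq_zero.mp h3)
  -- ## residues
  have hres : ∀ t : ℤ, (t % θ).toNat < θ ∧ ((t % θ).toNat : ℤ) = t % θ := by
    intro t
    have h0 : (0:ℤ) ≤ t % θ := Int.emod_nonneg t (by exact_mod_cast hθpos.ne')
    have h1 : t % θ < θ := Int.emod_lt_of_pos t (by exact_mod_cast hθpos)
    omega
  -- ## the solution φn
  refine ⟨fun t => iterF (F n) (t % θ).toNat xst, ?_, ?_, ?_, ?_, ?_, ?_, ?_⟩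
  · -- membership
    intro t
    have hj := (hres t).1
    have hjz := (hres t).2
    have h1 : iterF (F n) (t % θ).toNat xst
        ∈ Metric.closedBall (φ0 (((t % θ).toNat : ℕ) : ℤ)) (δ/2) :=
      hmemball xst hxstmem _ (Nat.le_of_lt hj)
    have h2 : U t = U (((t % θ).toNat : ℕ) : ℤ) := by rw [hjz]; exact hUmod t
    rw [h2]
    exact hballU _ hj h1
  · -- solution property
    intro t
    have hj := (hres t).1
    have hjz := (hres t).2
    set j : ℕ := (t % θ).toNat with hjdef
    have hFt : F n t = F n (j : ℤ) := by
      apply Fper' n t (j : ℤ)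
      rw [hjz]
      exact (modθ₀ t).symm
    have hmodeq : (t + 1) % θ = ((j:ℤ) + 1) % θ := by
      have h0 : t % θ = (j:ℤ) % θ := by
        rw [hjz]
        exact (Int.emod_emod_of_dvd t dvd_rfl).symm
      exact Int.ModEq.add_right 1 h0
    rcases Nat.lt_or_ge (j+1) θ with hc | hc
    · have hjj : (t+1) % θ = ((j+1 : ℕ) : ℤ) := by
        rw [hmodeq]
        push_cast
        exact Int.emod_eq_of_lt (by positivity) (by exact_mod_cast hc)
      show iterF (F n) ((t+1) % θ).toNat xst = F n t (iterF (F n) j xst)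
      rw [hjj, hFt, Int.toNat_natCast]
      rfl
    · have hjθ : j + 1 = θ := by omega
      have hjj : (t+1) % θ = 0 := by
        rw [hmodeq]
        have h5 : (j:ℤ) + 1 = (θ:ℤ) := by exact_mod_cast hjθ
        rw [h5, Int.emod_self]
      show iterF (F n) ((t+1) % θ).toNat xst = F n t (iterF (F n) j xst)
      rw [hjj, hFt]
      have h6 : F n (j:ℤ) (iterF (F n) j xst) = iterF (F n) (j+1) xst := rfl
      rw [h6, hjθ, hPfix]
      rfl
  · -- periodicity
    intro t
    have h1 : (t + θ) % θ = t % θ := by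
      have := Int.add_mul_emod_self_left (a := t) (b := (θ:ℤ)) (c := 1)
      simpa using this
    show iterF (F n) ((t + θ) % θ).toNat xst = iterF (F n) (t % θ).toNat xst
    rw [h1]
  · -- ρ₀-closeness
    intro t
    have hj := (hres t).1
    have hjz := (hres t).2
    have h1 : φ0 t = φ0 (((t % θ).toNat : ℕ) : ℤ) := by rw [hjz]; exact hφ0mod t
    rw [h1]
    exact le_trans (hK _ (Nat.le_of_lt hj)) hKρ
  · -- uniqueness
    intro ψ hψU hψsol hψper hψclose
    have hψiter : ∀ j : ℕ, ψ (j : ℤ) = iterF (F n) j (ψ 0) := by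
      intro j
      induction j with
      | zero => rfl
      | succ j ih =>
        have hcast : ((j+1 : ℕ) : ℤ) = (j:ℤ) + 1 := by push_cast; ring
        rw [hcast, hψsol (j:ℤ), ih]
        rfl
    have hψθ : iterF (F n) θ (ψ 0) = ψ 0 := by
      rw [← hψiter θ]
      have h := hψper 0
      rwa [zero_add] at h
    have hψ0 : ψ 0 = xst := huniq (ψ 0) (by simpa using hψclose 0) hψθ
    funext t
    have hψmod : ψ t = ψ (t % θ) :=
      int_periodic hθpos hψper (Int.emod_emod_of_dvd t dvd_rfl).symm
    rw [hψmod, ← (hres t).2, hψiter, hψ0, Int.toNat_natCast]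
  · -- K₀-estimate
    intro t
    have hj := (hres t).1
    have hjz := (hres t).2
    have h1 : φ0 t = φ0 (((t % θ).toNat : ℕ) : ℤ) := by rw [hjz]; exact hφ0mod t
    rw [h1]
    exact hK _ (Nat.le_of_lt hj)
  · -- weak hyperbolicity
    have hBeq : prodOp (fun t => fderiv ℂ (F n t) (iterF (F n) (t % θ).toNat xst)) θ
        = prodOp (fun t => fderiv ℂ (F n t) (iterF (F n) t.toNat xst)) θ := by
      apply prodOp_congr
      intro j hj
      have h1 : ((j:ℤ)) % θ = (j:ℤ) :=
        Int.emod_eq_of_lt (Int.natCast_nonneg j) (by exact_mod_cast hj)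
      rw [h1]
    set D : X →L[ℂ] X := prodOp (fun t => fderiv ℂ (F n t) (iterF (F n) t.toNat xst)) θ
      with hDdef
    have hfar := hDclose xst hxstmem
    have hnorm : ‖Tn * (D - Ξ)‖ < 1 := by
      calc ‖Tn * (D - Ξ)‖ ≤ ‖Tn‖ * ‖D - Ξ‖ := norm_mul_le _ _
      _ ≤ κ * ((θ:ℝ) * LP * ε') :=
          mul_le_mul (by rw [hκdef]; linarith) hfar (norm_nonneg _) hκ0.le
      _ ≤ 1/2 := hspec
      _ < 1 := by norm_num
    have hfact : (1 : X →L[ℂ] X) - D = (T : X →L[ℂ] X) * (1 - Tn * (D - Ξ)) := by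
      rw [mul_sub, mul_one, ← mul_assoc, hTn, T.mul_inv, one_mul, hT]
      abel
    have hu2 : IsUnit ((1 : X →L[ℂ] X) - D) := by
      rw [hfact]
      exact ⟨T * Units.oneSub _ hnorm, rfl⟩
    rw [spectrum.notMem_iff, map_one, hBeq]
    exact hu2
end

section
/- Under the hypotheses of the persistence theorem for periodic solutions — X a complex Banach space; θ₀-periodic C¹ maps F_t^n : U_t → X (n ∈ ℕ₀) with DF_t^n uniformly continuous on bounded sets uniformly in n ∈ ℕ, {DF_t^n}_{n∈ℕ} equicontinuous, and for each n ∈ ℕ some 0 ≤ t < θ₀ with DF_t^n compact-operator-valued; φ⁰ a θ₁-periodic solution of u_{t+1} = F_t^0(u_t); θ := lcm(θ₀,θ₁); ‖F_t^n(φ_t^0) − F_t^0(φ_t^0)‖ ≤ Γ₀(1/n) with lim_{ϱ↘0} Γ₀(ϱ) = 0 and lim_{n→∞} ‖DF_t^n(φ_t^0) − DF_t^0(φ_t^0)‖ = 0 for 0 ≤ t < θ — assume additionally that φ⁰ is hyperbolic, i.e. σ(Ξ_θ^0) ∩ 𝕊¹ = ∅ where Ξ_θ^0 := DF_{θ−1}^0(φ_{θ−1}^0)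 ∘ ⋯ ∘ DF_0^0(φ_0^0) and 𝕊¹ = {z ∈ ℂ : |z| = 1}. Then there exists N ∈ ℕ such that for all n ≥ N the θ-periodic solutions φⁿ of u_{t+1} = F_t^n(u_t) obtained from the persistence theorem are hyperbolic as well: σ(DF_{θ−1}^n(φ_{θ−1}^n) ∘ ⋯ ∘ DF_0^n(φ_0^n)) ∩ 𝕊¹ = ∅. -/
open Filter Topology

lemma zperiodic_key {β : Type*} (g : ℤ → β) (p : ℤ)
    (h : ∀ t : ℤ, g (t + p) = g t) : ∀ k : ℤ, ∀ s : ℤ, g (s + k * p) = g s := by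
  intro k
  induction k using Int.induction_on with
  | zero => simp
  | succ k ih =>
      intro s
      have e : s + ((k : ℤ) + 1) * p = (s + k * p) + p := by ring
      rw [e, h, ih]
  | pred k ih =>
      intro s
      have e : (s + (-(k:ℤ) - 1) * p) + p = s + (-(k:ℤ)) * p := by ring
      have h2 := h (s + (-(k:ℤ) - 1) * p)
      rw [e] at h2
      rw [← h2, ih]

lemma zperiodic_mod {β : Type*} (g : ℤ → β) (p : ℕ)
    (h : ∀ t : ℤ, g (t + p) = g t) (t : ℤ) : g t = g (t % (p : ℤ)) := by
  have h1 : t % (p:ℤ) + (t / p) * p = t := by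
    have := Int.mul_ediv_add_emod t p
    linarith
  calc g t = g (t % p + (t / p) * p) := by rw [h1]
    _ = g (t % p) := zperiodic_key g p h _ _

lemma spectral_stability {X : Type*} [NormedAddCommGroup X] [NormedSpace ℂ X] [CompleteSpace X]
    (Ξ : X →L[ℂ] X)
    (h : ∀ z : ℂ, ‖z‖ = 1 → IsUnit (algebraMap ℂ (X →L[ℂ] X) z - Ξ)) :
    ∃ η : ℝ, 0 < η ∧ ∀ T : X →L[ℂ] X, ‖T - Ξ‖ < η →
      ∀ z : ℂ, ‖z‖ = 1 → IsUnit (algebraMap ℂ (X →L[ℂ] X) z - T) := by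
  set f : ℂ → (X →L[ℂ] X) := fun z => algebraMap ℂ (X →L[ℂ] X) z - Ξ with hf
  have hcont : Continuous f := (continuous_algebraMap ℂ (X →L[ℂ] X)).sub continuous_const
  have hK : IsCompact (f '' Metric.sphere (0:ℂ) 1) :=
    (isCompact_sphere 0 1).image hcont
  have hsub : f '' Metric.sphere (0:ℂ) 1 ⊆ {x : X →L[ℂ] X | IsUnit x} := by
    rintro _ ⟨z, hz, rfl⟩
    exact h z (by simpa using hz)
  obtain ⟨δ, hδ, hth⟩ := hK.exists_thickening_subset_open Units.isOpen hsub
  refine ⟨δ, hδ, fun T hT z hz => ?_⟩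
  have : algebraMap ℂ (X →L[ℂ] X) z - T ∈ Metric.thickening δ (f '' Metric.sphere (0:ℂ) 1) := by
    rw [Metric.mem_thickening_iff]
    refine ⟨f z, ⟨z, by simpa using hz, rfl⟩, ?_⟩
    rw [dist_eq_norm]
    simpa [hf] using (by simpa [norm_sub_rev] using hT : ‖Ξ - T‖ < δ)
  exact hth this

set_option maxHeartbeats 2000000 in
/-- Theorem 2.2: persistence of weakly hyperbolic periodic solutions. Under the stated
smoothness, uniform continuity, equicontinuity and compactness assumptions on the
`θ₀`-periodic right-hand sides `F_t^n` and the consistency assumptions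
`‖F_t^n(φ_t^0) − F_t^0(φ_t^0)‖ ≤ Γ₀(1/n)`,
`‖DF_t^n(φ_t^0) − DF_t^0(φ_t^0)‖ → 0`, every weakly hyperbolic `θ₁`-periodic solution
`φ⁰` of the unperturbed equation persists: for every sufficiently large `n` there is a
`θ`-periodic solution `φⁿ` (θ = lcm(θ₀,θ₁)), unique in a `ρ₀`-neighborhood of `φ⁰`,
satisfying `sup_t ‖φ_t^n − φ_t^0‖ ≤ K₀ Γ₀(1/n)`; if `φ⁰` is moreover hyperbolic
(`σ(Ξ_θ^0) ∩ 𝕊¹ = ∅`), then the perturbed solutions `φⁿ` are hyperbolic as well. -/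
theorem perturbed_solutions_are_hyperbolic
    {X : Type*} [NormedAddCommGroup X] [NormedSpace ℂ X] [CompleteSpace X]
    (θ₀ θ₁ θ : ℕ) (hθ₀ : 0 < θ₀) (hθ₁ : 0 < θ₁) (hθ : θ = Nat.lcm θ₀ θ₁)
    (U : ℤ → Set X) (hUopen : ∀ t, IsOpen (U t)) (hUper : ∀ t : ℤ, U (t + θ₀) = U t)
    (F : ℕ → ℤ → X → X) (hFper : ∀ (n : ℕ) (t : ℤ), F n (t + θ₀) = F n t)
    -- (i) every F_t^n is continuously differentiable on U_t
    (hC1 : ∀ (n : ℕ) (t : ℤ), ContDiffOn ℂ 1 (F n t) (U t))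
    -- (ii) DF_t^n uniformly continuous on bounded sets, uniformly in n ∈ ℕ
    (hUC : ∀ t : ℤ, 0 ≤ t → t < θ₀ → ∀ B : Set X, B ⊆ U t → Bornology.IsBounded B →
      ∀ ε : ℝ, 0 < ε → ∃ δ : ℝ, 0 < δ ∧ ∀ n : ℕ, 1 ≤ n → ∀ u ∈ B, ∀ v ∈ B,
        ‖u - v‖ < δ → ‖fderiv ℂ (F n t) u - fderiv ℂ (F n t) v‖ ≤ ε)
    -- (ii) the family {DF_t^n}_{n∈ℕ} is equicontinuous
    (hequi : ∀ t : ℤ, 0 ≤ t → t < θ₀ → ∀ u ∈ U t, ∀ ε : ℝ, 0 < ε →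
      ∃ δ : ℝ, 0 < δ ∧ ∀ n : ℕ, 1 ≤ n → ∀ v ∈ U t, ‖v - u‖ < δ →
        ‖fderiv ℂ (F n t) v - fderiv ℂ (F n t) u‖ ≤ ε)
    -- (ii) for every n there is a time with compact-operator-valued derivative
    (hcomp : ∀ n : ℕ, 1 ≤ n → ∃ t : ℤ, 0 ≤ t ∧ t < θ₀ ∧ ∀ u ∈ U t,
      IsCompactOperator (fderiv ℂ (F n t) u))
    -- φ⁰ is a θ₁-periodic solution of the unperturbed equation
    (φ0 : ℤ → X) (hmem : ∀ t : ℤ, φ0 t ∈ U t)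
    (hsol : ∀ t : ℤ, φ0 (t + 1) = F 0 t (φ0 t))
    (hper : ∀ t : ℤ, φ0 (t + θ₁) = φ0 t)
    -- weak hyperbolicity: 1 ∉ σ(Ξ_θ^0)
    (hweak : (1 : ℂ) ∉ spectrum ℂ (prodOp (fun t => fderiv ℂ (F 0 t) (φ0 t)) θ))
    -- hyperbolicity: σ(Ξ_θ^0) ∩ 𝕊¹ = ∅
    (hhyp : spectrum ℂ (prodOp (fun t => fderiv ℂ (F 0 t) (φ0 t)) θ) ∩
      {z : ℂ | ‖z‖ = 1} = ∅)
    -- consistency assumptions (2.7) and (2.8)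
    (Γ₀ : ℝ → ℝ) (hΓ₀nn : ∀ ϱ : ℝ, 0 ≤ Γ₀ ϱ)
    (hΓ₀lim : Tendsto Γ₀ (nhdsWithin 0 (Set.Ioi 0)) (nhds 0))
    (hFconv : ∀ t : ℤ, 0 ≤ t → t < θ → ∀ n : ℕ, 1 ≤ n →
      ‖F n t (φ0 t) - F 0 t (φ0 t)‖ ≤ Γ₀ (1 / (n : ℝ)))
    (hDconv : ∀ t : ℤ, 0 ≤ t → t < θ →
      Tendsto (fun n : ℕ => ‖fderiv ℂ (F n t) (φ0 t) - fderiv ℂ (F 0 t) (φ0 t)‖)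
        atTop (nhds 0)) :
    ∃ ρ₀ : ℝ, 0 < ρ₀ ∧ ∃ K₀ : ℝ, 0 ≤ K₀ ∧ ∃ N₀ : ℕ, 1 ≤ N₀ ∧
      ∀ n : ℕ, N₀ ≤ n → ∃ φn : ℤ → X,
        -- φⁿ is a θ-periodic solution of the n-th equation in B_{ρ₀}(φ⁰)
        (∀ t : ℤ, φn t ∈ U t) ∧
        (∀ t : ℤ, φn (t + 1) = F n t (φn t)) ∧
        (∀ t : ℤ, φn (t + θ) = φn t) ∧
        (∀ t : ℤ, ‖φn t - φ0 t‖ ≤ ρ₀) ∧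
        -- uniqueness among θ-periodic solutions in B_{ρ₀}(φ⁰)
        (∀ ψ : ℤ → X, (∀ t : ℤ, ψ t ∈ U t) → (∀ t : ℤ, ψ (t + 1) = F n t (ψ t)) →
          (∀ t : ℤ, ψ (t + θ) = ψ t) → (∀ t : ℤ, ‖ψ t - φ0 t‖ ≤ ρ₀) → ψ = φn) ∧
        -- convergence estimate (2.9)
        (∀ t : ℤ, ‖φn t - φ0 t‖ ≤ K₀ * Γ₀ (1 / (n : ℝ))) ∧
        -- φⁿ is hyperbolic as well: σ(Ξ_θ^n) ∩ 𝕊¹ = ∅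
        spectrum ℂ (prodOp (fun t => fderiv ℂ (F n t) (φn t)) θ) ∩
          {z : ℂ | ‖z‖ = 1} = ∅ := by
  classical
  -- basic arithmetic facts
  have θpos : 0 < θ := hθ ▸ Nat.pos_of_ne_zero (Nat.lcm_ne_zero hθ₀.ne' hθ₁.ne')
  have hθ₀θ : θ₀ ∣ θ := hθ ▸ Nat.dvd_lcm_left θ₀ θ₁
  have hθ₁θ : θ₁ ∣ θ := hθ ▸ Nat.dvd_lcm_right θ₀ θ₁
  -- θ-periodicity of F, U, φ0
  have hFθ : ∀ n : ℕ, ∀ t : ℤ, F n (t + θ) = F n t := by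
    intro n t
    obtain ⟨m, hm⟩ := hθ₀θ
    have : (θ : ℤ) = (m : ℤ) * θ₀ := by push_cast [hm]; ring
    rw [this]
    exact zperiodic_key (F n) θ₀ (hFper n) m t
  have hUθ : ∀ t : ℤ, U (t + θ) = U t := by
    intro t
    obtain ⟨m, hm⟩ := hθ₀θ
    have : (θ : ℤ) = (m : ℤ) * θ₀ := by push_cast [hm]; ring
    rw [this]
    exact zperiodic_key U θ₀ hUper m t
  have hφθ : ∀ t : ℤ, φ0 (t + θ) = φ0 t := by
    intro t
    obtain ⟨m, hm⟩ := hθ₁θ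
    have : (θ : ℤ) = (m : ℤ) * θ₁ := by push_cast [hm]; ring
    rw [this]
    exact zperiodic_key φ0 θ₁ hper m t
  -- reduction of an arbitrary integer time to its residue in [0, θ)
  have hres : ∀ t : ℤ, ((((t % (θ:ℤ)).toNat : ℕ)) : ℤ) = t % (θ:ℤ) := by
    intro t
    exact Int.toNat_of_nonneg (Int.emod_nonneg t (by exact_mod_cast θpos.ne'))
  have hreslt : ∀ t : ℤ, ((t % (θ:ℤ)).toNat : ℕ) < θ := by
    intro t
    have h1 : t % (θ:ℤ) < θ := Int.emod_lt_of_pos t (by exact_mod_cast θpos)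
    have := hres t
    omega
  have hFres : ∀ n : ℕ, ∀ t : ℤ, F n t = F n (((t % (θ:ℤ)).toNat : ℕ) : ℤ) := by
    intro n t
    rw [hres]
    have h1 := zperiodic_mod (F n) θ₀ (hFper n) t
    have h2 := zperiodic_mod (F n) θ₀ (hFper n) (t % (θ:ℤ))
    rw [Int.emod_emod_of_dvd t (by exact_mod_cast hθ₀θ)] at h2
    rw [h1, h2]
  have hUres : ∀ t : ℤ, U t = U (((t % (θ:ℤ)).toNat : ℕ) : ℤ) := by
    intro t
    rw [hres]
    have h1 := zperiodic_mod U θ₀ hUper t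
    have h2 := zperiodic_mod U θ₀ hUper (t % (θ:ℤ))
    rw [Int.emod_emod_of_dvd t (by exact_mod_cast hθ₀θ)] at h2
    rw [h1, h2]
  have hφres : ∀ t : ℤ, φ0 t = φ0 (((t % (θ:ℤ)).toNat : ℕ) : ℤ) := by
    intro t
    rw [hres]
    exact zperiodic_mod φ0 θ hφθ t
  -- the unperturbed derivative operators and their period product
  set A0 : ℕ → (X →L[ℂ] X) := fun j => fderiv ℂ (F 0 (j : ℤ)) (φ0 (j : ℤ)) with hA0
  set P : ℕ → (X →L[ℂ] X) := prodOp (fun t => fderiv ℂ (F 0 t) (φ0 t)) with hP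
  have hPsucc : ∀ k : ℕ, P (k+1) = (A0 k).comp (P k) := fun k => rfl
  set Ξ := P θ with hΞ
  -- invertibility of 1 - Ξ
  have hweakU : IsUnit ((1 : X →L[ℂ] X) - Ξ) := by
    have := spectrum.notMem_iff.mp hweak
    simpa using this
  obtain ⟨w, hw⟩ := hweakU
  set Linv : X →L[ℂ] X := ↑w⁻¹ with hLinv
  have hLi1 : ∀ x : X, Linv (((1 : X →L[ℂ] X) - Ξ) x) = x := by
    intro x
    have : (↑w⁻¹ * ↑w : X →L[ℂ] X) = 1 := w.inv_mul
    rw [hw] at this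
    calc Linv (((1 : X →L[ℂ] X) - Ξ) x) = ((↑w⁻¹ * ((1 : X →L[ℂ] X) - Ξ)) : X →L[ℂ] X) x := rfl
      _ = (1 : X →L[ℂ] X) x := by rw [this]
      _ = x := rfl
  have hLi2 : ∀ x : X, ((1 : X →L[ℂ] X) - Ξ) (Linv x) = x := by
    intro x
    have : (↑w * ↑w⁻¹ : X →L[ℂ] X) = 1 := w.mul_inv
    rw [hw] at this
    calc ((1 : X →L[ℂ] X) - Ξ) (Linv x) = ((((1 : X →L[ℂ] X) - Ξ) * ↑w⁻¹) : X →L[ℂ] X) x := rfl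
      _ = (1 : X →L[ℂ] X) x := by rw [this]
      _ = x := rfl
  set M : ℝ := ‖Linv‖ + 1 with hM
  have hM1 : 1 ≤ M := by rw [hM]; linarith [norm_nonneg Linv]
  have hM0 : 0 < M := by linarith
  have hMx : ∀ x : X, ‖Linv x‖ ≤ M * ‖x‖ := by
    intro x
    calc ‖Linv x‖ ≤ ‖Linv‖ * ‖x‖ := Linv.le_opNorm x
      _ ≤ M * ‖x‖ := by apply mul_le_mul_of_nonneg_right _ (norm_nonneg x); simp [hM]
  -- bound for the unperturbed derivatives
  have hrange : (Finset.range θ).Nonempty := Finset.nonempty_range_iff.mpr θpos.ne'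
  set C : ℝ := 1 + (Finset.range θ).sup' hrange (fun j => ‖A0 j‖) with hC
  have hC1' : 1 ≤ C := by
    have : (0:ℝ) ≤ (Finset.range θ).sup' hrange (fun j => ‖A0 j‖) := by
      obtain ⟨j, hj⟩ := hrange
      exact le_trans (norm_nonneg (A0 j)) (Finset.le_sup' (fun j => ‖A0 j‖) hj)
    linarith
  have hCA : ∀ j : ℕ, j < θ → ‖A0 j‖ + 1 ≤ C := by
    intro j hj
    have := Finset.le_sup' (fun j => ‖A0 j‖) (Finset.mem_range.mpr hj)
    simp only [hC]; linarith
  set D : ℝ := C + 1 with hD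
  have hD1 : 1 ≤ D := by linarith
  have hD0 : 0 < D := by linarith
  have hCD : C ≤ D := by linarith
  have hDpow1 : ∀ k : ℕ, 1 ≤ D ^ k := fun k => one_le_pow₀ hD1
  have hDpowmono : ∀ k l : ℕ, k ≤ l → D ^ k ≤ D ^ l := fun k l h => pow_le_pow_right₀ hD1 h
  -- spectral stability radius η
  obtain ⟨η, hη0, hηP⟩ := spectral_stability Ξ (by
    intro z hz
    refine spectrum.notMem_iff.mp ?_
    intro hmemz
    exact Set.eq_empty_iff_forall_notMem.mp hhyp z ⟨hmemz, hz⟩)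
  -- choice of ε
  set ε : ℝ := min 1 (min (η / (2 * ((θ:ℝ) * D^θ + 1))) (1 / (2*M*((θ:ℝ)*D^θ+1)))) with hε
  have hθD0 : (0:ℝ) < (θ:ℝ) * D^θ + 1 := by
    have : (0:ℝ) ≤ (θ:ℝ) * D^θ := mul_nonneg (Nat.cast_nonneg θ) (by positivity)
    linarith
  have hε0 : 0 < ε := by
    apply lt_min one_pos
    apply lt_min
    · positivity
    · positivity
  have hε1 : ε ≤ 1 := min_le_left _ _
  have hεη : ε * ((θ:ℝ) * D^θ) < η := by
    have h1 : ε ≤ η / (2 * ((θ:ℝ) * D^θ + 1)) := le_trans (min_le_right _ _) (min_le_left _ _)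
    have h2 : ε * ((θ:ℝ) * D^θ) ≤ (η / (2 * ((θ:ℝ) * D^θ + 1))) * ((θ:ℝ) * D^θ) := by
      apply mul_le_mul_of_nonneg_right h1
      exact mul_nonneg (Nat.cast_nonneg θ) (by positivity)
    have h3 : (η / (2 * ((θ:ℝ) * D^θ + 1))) * ((θ:ℝ) * D^θ) < η := by
      rw [div_mul_eq_mul_div, div_lt_iff₀ (by linarith)]
      nlinarith [mul_nonneg (Nat.cast_nonneg θ : (0:ℝ) ≤ θ) (le_of_lt (show (0:ℝ) < D^θ by positivity))]
    linarith
  have hεM : M * (ε * ((θ:ℝ) * D^θ)) ≤ 1/2 := by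
    have h1 : ε ≤ 1 / (2*M*((θ:ℝ)*D^θ+1)) := le_trans (min_le_right _ _) (min_le_right _ _)
    have h2 : M * (ε * ((θ:ℝ) * D^θ)) ≤ M * ((1 / (2*M*((θ:ℝ)*D^θ+1))) * ((θ:ℝ) * D^θ)) := by
      apply mul_le_mul_of_nonneg_left _ (le_of_lt hM0)
      apply mul_le_mul_of_nonneg_right h1
      exact mul_nonneg (Nat.cast_nonneg θ) (by positivity)
    have h3 : M * ((1 / (2*M*((θ:ℝ)*D^θ+1))) * ((θ:ℝ) * D^θ)) ≤ 1/2 := by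
      have hT : (0:ℝ) ≤ (θ:ℝ)*D^θ := mul_nonneg (Nat.cast_nonneg θ) (by positivity)
      have he : M * ((1 / (2*M*((θ:ℝ)*D^θ+1))) * ((θ:ℝ) * D^θ))
          = (M*((θ:ℝ)*D^θ))/(2*M*((θ:ℝ)*D^θ+1)) := by
        field_simp
      rw [he, div_le_iff₀ (by positivity)]
      nlinarith
    linarith
  -- per-time data: radius and threshold for uniform derivative bounds
  have pack : ∀ j : ℕ, ∃ rj : ℝ, 0 < rj ∧ ∃ Nj : ℕ, 1 ≤ Nj ∧ (j < θ →
      Metric.closedBall (φ0 (j:ℤ)) rj ⊆ U (j:ℤ) ∧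
      ∀ n : ℕ, Nj ≤ n → ∀ v ∈ Metric.closedBall (φ0 (j:ℤ)) rj,
        ‖fderiv ℂ (F n (j:ℤ)) v - A0 j‖ ≤ ε) := by
    intro j
    by_cases hj : j < θ
    · -- the residue of j mod θ₀
      set t' : ℤ := (j : ℤ) % θ₀ with ht'
      have ht'0 : 0 ≤ t' := Int.emod_nonneg _ (by exact_mod_cast hθ₀.ne')
      have ht'lt : t' < θ₀ := Int.emod_lt_of_pos _ (by exact_mod_cast hθ₀)
      have hU' : U (j:ℤ) = U t' := zperiodic_mod U θ₀ hUper (j:ℤ)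
      have hF' : ∀ m : ℕ, F m (j:ℤ) = F m t' := fun m => zperiodic_mod (F m) θ₀ (hFper m) (j:ℤ)
      have hmem' : φ0 (j:ℤ) ∈ U t' := hU' ▸ hmem (j:ℤ)
      obtain ⟨r1, hr10, hr1⟩ := Metric.isOpen_iff.mp (hUopen t') _ hmem'
      obtain ⟨δ, hδ0, hδ⟩ := hequi t' ht'0 ht'lt (φ0 (j:ℤ)) hmem' (ε/2) (by linarith)
      have htd : Tendsto (fun n : ℕ => ‖fderiv ℂ (F n (j:ℤ)) (φ0 (j:ℤ)) - A0 j‖)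
          atTop (nhds 0) := hDconv (j:ℤ) (by positivity) (by exact_mod_cast hj)
      have hev : ∀ᶠ n : ℕ in atTop, ‖fderiv ℂ (F n (j:ℤ)) (φ0 (j:ℤ)) - A0 j‖ < ε/2 :=
        htd.eventually_lt_const (by linarith)
      obtain ⟨N2, hN2⟩ := eventually_atTop.mp hev
      refine ⟨min (r1/2) (δ/2), by positivity, max N2 1, le_max_right _ _, fun _ => ⟨?_, ?_⟩⟩
      · intro v hv
        rw [hU']
        apply hr1
        have : dist v (φ0 (j:ℤ)) ≤ min (r1/2) (δ/2) := Metric.mem_closedBall.mp hv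
        have h2 : dist v (φ0 (j:ℤ)) < r1 := lt_of_le_of_lt (le_trans this (min_le_left _ _)) (by linarith)
        exact Metric.mem_ball.mpr h2
      · intro n hn v hv
        have hn1 : 1 ≤ n := le_trans (le_max_right _ _) hn
        have hnN2 : N2 ≤ n := le_trans (le_max_left _ _) hn
        have hvd : dist v (φ0 (j:ℤ)) ≤ min (r1/2) (δ/2) := Metric.mem_closedBall.mp hv
        have hvδ : ‖v - φ0 (j:ℤ)‖ < δ := by
          rw [← dist_eq_norm]
          exact lt_of_le_of_lt (le_trans hvd (min_le_right _ _)) (by linarith)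
        have hvU : v ∈ U t' := by
          apply hr1
          refine Metric.mem_ball.mpr (lt_of_le_of_lt (le_trans hvd (min_le_left _ _)) (by linarith))
        have h1 : ‖fderiv ℂ (F n t') v - fderiv ℂ (F n t') (φ0 (j:ℤ))‖ ≤ ε/2 :=
          hδ n hn1 v hvU hvδ
        rw [← hF' n] at h1
        have h2 : ‖fderiv ℂ (F n (j:ℤ)) (φ0 (j:ℤ)) - A0 j‖ ≤ ε/2 := le_of_lt (hN2 n hnN2)
        calc ‖fderiv ℂ (F n (j:ℤ)) v - A0 j‖
            = ‖(fderiv ℂ (F n (j:ℤ)) v - fderiv ℂ (F n (j:ℤ)) (φ0 (j:ℤ)))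
              + (fderiv ℂ (F n (j:ℤ)) (φ0 (j:ℤ)) - A0 j)‖ := by rw [sub_add_sub_cancel]
          _ ≤ ‖fderiv ℂ (F n (j:ℤ)) v - fderiv ℂ (F n (j:ℤ)) (φ0 (j:ℤ))‖
              + ‖fderiv ℂ (F n (j:ℤ)) (φ0 (j:ℤ)) - A0 j‖ := norm_add_le _ _
          _ ≤ ε/2 + ε/2 := add_le_add h1 h2
          _ = ε := by ring
    · exact ⟨1, one_pos, 1, le_rfl, fun h => absurd h hj⟩
  choose rr hrr0 NN hNN1 hpack using pack
  -- uniform radius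
  set rad : ℝ := (Finset.range θ).inf' hrange rr with hrad
  have hrad0 : 0 < rad := by
    rw [hrad, Finset.lt_inf'_iff]
    exact fun j _ => hrr0 j
  have hradle : ∀ j : ℕ, j < θ → rad ≤ rr j := by
    intro j hj
    exact Finset.inf'_le rr (Finset.mem_range.mpr hj)
  -- the persistence radius and constant
  set ρ₀ : ℝ := rad / (2 * D^θ) with hρ₀
  have hρ₀0 : 0 < ρ₀ := by positivity
  have hρ₀rad : 2 * D^θ * ρ₀ = rad := by
    rw [hρ₀]; field_simp
  have hρ₀lerad : ρ₀ ≤ rad := by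
    have := hDpow1 θ
    rw [hρ₀, div_le_iff₀ (by positivity)]
    nlinarith
  set K₀ : ℝ := D^θ * θ * (2*M*D^θ + 1) with hK₀
  have hK₀0 : 0 ≤ K₀ := by positivity
  -- smallness threshold for the consistency error
  set gb : ℝ := min (ρ₀/(2*M*(D^θ)*((θ:ℝ)+1))) (ρ₀/(K₀+1)) with hgb
  have hgb0 : 0 < gb := by
    apply lt_min <;> positivity
  have hγlim : Tendsto (fun n : ℕ => Γ₀ (1/(n:ℝ))) atTop (nhds 0) := by
    apply hΓ₀lim.comp
    rw [tendsto_nhdsWithin_iff]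
    constructor
    · exact tendsto_one_div_atTop_nhds_zero_nat
    · filter_upwards [eventually_ge_atTop 1] with n hn
      have : (0:ℝ) < (n:ℝ) := by exact_mod_cast hn
      exact Set.mem_Ioi.mpr (by positivity)
  obtain ⟨NΓ, hNΓ⟩ := eventually_atTop.mp (hγlim.eventually_lt_const hgb0)
  -- the global threshold
  set N₀ : ℕ := max (max ((Finset.range θ).sup NN) NΓ) 1 with hN₀
  refine ⟨ρ₀, hρ₀0, K₀, hK₀0, N₀, le_max_right _ _, fun n hn => ?_⟩
  have hnN : ∀ j : ℕ, j < θ → NN j ≤ n := by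
    intro j hj
    calc NN j ≤ (Finset.range θ).sup NN := Finset.le_sup (Finset.mem_range.mpr hj)
      _ ≤ N₀ := le_trans (le_max_left _ _) (le_max_left _ _)
      _ ≤ n := hn
  have hn1 : 1 ≤ n := le_trans (le_max_right _ _) hn
  set γ : ℝ := Γ₀ (1/(n:ℝ)) with hγ
  have hγ0 : 0 ≤ γ := hΓ₀nn _
  have hγgb : γ < gb := hNΓ n (le_trans (le_trans (le_max_right _ _) (le_max_left _ _)) hn)
  have hγ1 : γ ≤ ρ₀/(2*M*(D^θ)*((θ:ℝ)+1)) := le_of_lt (lt_of_lt_of_le hγgb (min_le_left _ _))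
  have hγ2 : γ ≤ ρ₀/(K₀+1) := le_of_lt (lt_of_lt_of_le hγgb (min_le_right _ _))
  have hθγ : (θ:ℝ) * γ ≤ ρ₀ := by
    have h1 : (θ:ℝ) * γ ≤ (θ:ℝ) * (ρ₀/(2*M*(D^θ)*((θ:ℝ)+1))) :=
      mul_le_mul_of_nonneg_left hγ1 (Nat.cast_nonneg θ)
    have hc : γ * (2*M*(D^θ)*((θ:ℝ)+1)) ≤ ρ₀ := (le_div_iff₀ (by positivity)).mp hγ1
    have hcc : (θ:ℝ) ≤ 2*M*(D^θ)*((θ:ℝ)+1) := by nlinarith [hDpow1 θ, hM1, (Nat.cast_nonneg θ : (0:ℝ) ≤ (θ:ℝ))]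
    have := mul_le_mul_of_nonneg_left hcc hγ0
    nlinarith
  -- the orbit maps of the n-th equation
  obtain ⟨O, hO0, hOs⟩ : ∃ O : X → ℕ → X, (∀ x, O x 0 = x) ∧
      (∀ x m, O x (m+1) = F n (m:ℤ) (O x m)) :=
    ⟨fun x k => Nat.rec x (fun m u => F n (m:ℤ) u) k, fun _ => rfl, fun _ _ => rfl⟩
  -- one-step mean value estimates
  have hstep : ∀ j : ℕ, j < θ → ∀ a ∈ Metric.closedBall (φ0 (j:ℤ)) (rr j),
      ∀ b ∈ Metric.closedBall (φ0 (j:ℤ)) (rr j),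
      ‖F n (j:ℤ) a - F n (j:ℤ) b - A0 j (a - b)‖ ≤ ε * ‖a - b‖ := by
    intro j hj a ha b hb
    have hf : ∀ v ∈ Metric.closedBall (φ0 (j:ℤ)) (rr j),
        HasFDerivWithinAt (F n (j:ℤ)) (fderiv ℂ (F n (j:ℤ)) v)
          (Metric.closedBall (φ0 (j:ℤ)) (rr j)) v := by
      intro v hv
      have hvU : v ∈ U (j:ℤ) := (hpack j hj).1 hv
      exact (((hC1 n (j:ℤ)).differentiableOn one_ne_zero).differentiableAt
        ((hUopen _).mem_nhds hvU)).hasFDerivAt.hasFDerivWithinAt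
    have hbd : ∀ v ∈ Metric.closedBall (φ0 (j:ℤ)) (rr j),
        ‖fderiv ℂ (F n (j:ℤ)) v - A0 j‖ ≤ ε :=
      fun v hv => (hpack j hj).2 n (hnN j hj) v hv
    exact Convex.norm_image_sub_le_of_norm_hasFDerivWithin_le' hf hbd
      (convex_closedBall _ _) hb ha
  have hlip : ∀ j : ℕ, j < θ → ∀ a ∈ Metric.closedBall (φ0 (j:ℤ)) (rr j),
      ∀ b ∈ Metric.closedBall (φ0 (j:ℤ)) (rr j),
      ‖F n (j:ℤ) a - F n (j:ℤ) b‖ ≤ C * ‖a - b‖ := by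
    intro j hj a ha b hb
    have h1 := hstep j hj a ha b hb
    have h2 : ‖A0 j (a - b)‖ ≤ ‖A0 j‖ * ‖a - b‖ := (A0 j).le_opNorm _
    have h3 : ‖A0 j‖ + 1 ≤ C := hCA j hj
    calc ‖F n (j:ℤ) a - F n (j:ℤ) b‖
        = ‖(F n (j:ℤ) a - F n (j:ℤ) b - A0 j (a - b)) + A0 j (a - b)‖ := by
          rw [sub_add_cancel]
      _ ≤ ‖F n (j:ℤ) a - F n (j:ℤ) b - A0 j (a - b)‖ + ‖A0 j (a - b)‖ := norm_add_le _ _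
      _ ≤ ε * ‖a - b‖ + ‖A0 j‖ * ‖a - b‖ := add_le_add h1 h2
      _ ≤ C * ‖a - b‖ := by nlinarith [norm_nonneg (a - b), hε1]
  -- a priori estimate on orbits starting near φ0 0
  have hradbd : ∀ k : ℕ, k ≤ θ → ∀ s : ℝ, 0 ≤ s → s ≤ ρ₀ → D^k * (s + k*γ) ≤ rad := by
    intro k hk s hs0 hs
    have h1 : (k:ℝ) * γ ≤ (θ:ℝ) * γ :=
      mul_le_mul_of_nonneg_right (by exact_mod_cast hk) hγ0
    calc D^k * (s + k*γ) ≤ D^θ * (s + k*γ) := by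
          apply mul_le_mul_of_nonneg_right (hDpowmono k θ hk)
          nlinarith [(Nat.cast_nonneg k : (0:ℝ) ≤ (k:ℝ))]
      _ ≤ D^θ * (2*ρ₀) := by
          apply mul_le_mul_of_nonneg_left _ (by positivity)
          linarith
      _ = rad := by rw [← hρ₀rad]; ring
  have keyA : ∀ k : ℕ, k ≤ θ → ∀ x : X, ‖x - φ0 0‖ ≤ ρ₀ →
      ‖O x k - φ0 (k:ℤ)‖ ≤ D^k * (‖x - φ0 0‖ + k*γ) := by
    intro k
    induction k with
    | zero => intro _ x hx; simp [hO0]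
    | succ k ih =>
        intro hk1 x hx
        have hk : k < θ := hk1
        have IH := ih hk.le x hx
        have hx0 : 0 ≤ ‖x - φ0 0‖ := norm_nonneg _
        have hOball : O x k ∈ Metric.closedBall (φ0 (k:ℤ)) (rr k) := by
          rw [Metric.mem_closedBall, dist_eq_norm]
          calc ‖O x k - φ0 (k:ℤ)‖ ≤ D^k * (‖x - φ0 0‖ + k*γ) := IH
            _ ≤ rad := hradbd k hk.le _ hx0 hx
            _ ≤ rr k := hradle k hk
        have hcball : φ0 (k:ℤ) ∈ Metric.closedBall (φ0 (k:ℤ)) (rr k) :=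
          Metric.mem_closedBall_self (hrr0 k).le
        have hφs : φ0 ((k:ℤ) + 1) = F 0 (k:ℤ) (φ0 (k:ℤ)) := hsol (k:ℤ)
        have hcast : (((k+1:ℕ)):ℤ) = (k:ℤ) + 1 := by push_cast; ring
        have hcons : ‖F n (k:ℤ) (φ0 (k:ℤ)) - F 0 (k:ℤ) (φ0 (k:ℤ))‖ ≤ γ :=
          hFconv (k:ℤ) (Int.natCast_nonneg k) (by exact_mod_cast hk) n hn1
        have hl := hlip k hk (O x k) hOball (φ0 (k:ℤ)) hcball
        have main : ‖O x (k+1) - φ0 ((k+1:ℕ):ℤ)‖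
            ≤ C * ‖O x k - φ0 (k:ℤ)‖ + γ := by
          rw [hOs, hcast, hφs]
          calc ‖F n (k:ℤ) (O x k) - F 0 (k:ℤ) (φ0 (k:ℤ))‖
              = ‖(F n (k:ℤ) (O x k) - F n (k:ℤ) (φ0 (k:ℤ)))
                + (F n (k:ℤ) (φ0 (k:ℤ)) - F 0 (k:ℤ) (φ0 (k:ℤ)))‖ := by
                rw [sub_add_sub_cancel]
            _ ≤ ‖F n (k:ℤ) (O x k) - F n (k:ℤ) (φ0 (k:ℤ))‖
                + ‖F n (k:ℤ) (φ0 (k:ℤ)) - F 0 (k:ℤ) (φ0 (k:ℤ))‖ := norm_add_le _ _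
            _ ≤ C * ‖O x k - φ0 (k:ℤ)‖ + γ := add_le_add hl hcons
        have hcast2 : ((k+1:ℕ):ℝ) = (k:ℝ) + 1 := by push_cast; ring
        calc ‖O x (k+1) - φ0 ((k+1:ℕ):ℤ)‖ ≤ C * ‖O x k - φ0 (k:ℤ)‖ + γ := main
          _ ≤ C * (D^k * (‖x - φ0 0‖ + k*γ)) + γ := by
              have := mul_le_mul_of_nonneg_left IH (by linarith : (0:ℝ) ≤ C)
              linarith
          _ ≤ D^(k+1) * (‖x - φ0 0‖ + (k+1:ℕ)*γ) := by
              rw [hcast2]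
              have hT0 : 0 ≤ ‖x - φ0 0‖ + (k:ℝ)*γ :=
                add_nonneg hx0 (mul_nonneg (Nat.cast_nonneg k) hγ0)
              have hDk0 : (0:ℝ) ≤ D^k := pow_nonneg hD0.le k
              have e1 : C * (D^k * (‖x - φ0 0‖ + (k:ℝ)*γ))
                  ≤ D^(k+1) * (‖x - φ0 0‖ + (k:ℝ)*γ) := by
                calc C * (D^k * (‖x - φ0 0‖ + (k:ℝ)*γ))
                    ≤ D * (D^k * (‖x - φ0 0‖ + (k:ℝ)*γ)) :=
                      mul_le_mul_of_nonneg_right hCD (mul_nonneg hDk0 hT0)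
                  _ = D^(k+1) * (‖x - φ0 0‖ + (k:ℝ)*γ) := by rw [pow_succ]; ring
              have e2 : γ ≤ D^(k+1) * γ := le_mul_of_one_le_left hγ0 (hDpow1 (k+1))
              have e3 : D^(k+1) * (‖x - φ0 0‖ + ((k:ℝ)+1)*γ)
                  = D^(k+1) * (‖x - φ0 0‖ + (k:ℝ)*γ) + D^(k+1)*γ := by ring
              linarith
  have hball : ∀ k : ℕ, k < θ → ∀ x : X, ‖x - φ0 0‖ ≤ ρ₀ →
      O x k ∈ Metric.closedBall (φ0 (k:ℤ)) (rr k) := by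
    intro k hk x hx
    rw [Metric.mem_closedBall, dist_eq_norm]
    calc ‖O x k - φ0 (k:ℤ)‖ ≤ D^k * (‖x - φ0 0‖ + k*γ) := keyA k hk.le x hx
      _ ≤ rad := hradbd k hk.le _ (norm_nonneg _) hx
      _ ≤ rr k := hradle k hk
  -- norm bound for the partial period products
  have hC0 : (0:ℝ) ≤ C := by linarith
  have hP0ap : ∀ z : X, P 0 z = z := fun _ => rfl
  have hPnorm : ∀ k : ℕ, k ≤ θ → ‖P k‖ ≤ C^k := by
    intro k
    induction k with
    | zero =>
        intro _
        calc ‖P 0‖ = ‖ContinuousLinearMap.id ℂ X‖ := rfl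
          _ ≤ 1 := ContinuousLinearMap.norm_id_le
          _ = C^0 := by norm_num
    | succ k ih =>
        intro hk1
        have hk : k < θ := hk1
        calc ‖P (k+1)‖ = ‖(A0 k).comp (P k)‖ := by rw [hPsucc]
          _ ≤ ‖A0 k‖ * ‖P k‖ := ContinuousLinearMap.opNorm_comp_le _ _
          _ ≤ C * C^k := mul_le_mul (by linarith [hCA k hk]) (ih hk.le)
              (norm_nonneg _) hC0
          _ = C^(k+1) := by rw [pow_succ]; ring
  have hCpowD : ∀ k : ℕ, C^k ≤ D^k := fun k => pow_le_pow_left₀ hC0 hCD k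
  -- difference of orbits versus the linearized dynamics
  have keyB : ∀ k : ℕ, k ≤ θ → ∀ x y : X, ‖x - φ0 0‖ ≤ ρ₀ → ‖y - φ0 0‖ ≤ ρ₀ →
      ‖O x k - O y k - P k (x - y)‖ ≤ ε * k * D^k * ‖x - y‖ ∧
      ‖O x k - O y k‖ ≤ C^k * ‖x - y‖ := by
    intro k
    induction k with
    | zero =>
        intro _ x y hx hy
        constructor
        · rw [hO0, hO0, hP0ap]
          simp
        · rw [hO0, hO0]
          simp
    | succ k ih =>
        intro hk1 x y hx hy
        have hk : k < θ := hk1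
        obtain ⟨IH1, IH2⟩ := ih hk.le x y hx hy
        have hq0 : (0:ℝ) ≤ ‖x - y‖ := norm_nonneg _
        have hOx := hball k hk x hx
        have hOy := hball k hk y hy
        have hs1 := hstep k hk (O x k) hOx (O y k) hOy
        have dec : O x (k+1) - O y (k+1) - P (k+1) (x - y)
            = (F n (k:ℤ) (O x k) - F n (k:ℤ) (O y k) - A0 k (O x k - O y k))
              + A0 k (O x k - O y k - P k (x - y)) := by
          rw [hOs, hOs, hPsucc]
          have hcomp' : (A0 k).comp (P k) (x - y) = A0 k (P k (x - y)) := rfl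
          rw [hcomp']
          simp only [map_sub]
          abel
        have hsecond : ‖A0 k (O x k - O y k - P k (x - y))‖
            ≤ C * (ε * k * D^k * ‖x - y‖) := by
          calc ‖A0 k (O x k - O y k - P k (x - y))‖
              ≤ ‖A0 k‖ * ‖O x k - O y k - P k (x - y)‖ := (A0 k).le_opNorm _
            _ ≤ C * (ε * k * D^k * ‖x - y‖) := mul_le_mul (by linarith [hCA k hk]) IH1
                (norm_nonneg _) hC0
        have hfirst : ‖F n (k:ℤ) (O x k) - F n (k:ℤ) (O y k) - A0 k (O x k - O y k)‖
            ≤ ε * (C^k * ‖x - y‖) := by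
          calc ‖F n (k:ℤ) (O x k) - F n (k:ℤ) (O y k) - A0 k (O x k - O y k)‖
              ≤ ε * ‖O x k - O y k‖ := hs1
            _ ≤ ε * (C^k * ‖x - y‖) := mul_le_mul_of_nonneg_left IH2 hε0.le
        constructor
        · have hDk0 : (0:ℝ) ≤ D^k := pow_nonneg hD0.le k
          have hb1 : ε * (C^k * ‖x - y‖) ≤ ε * (D^(k+1) * ‖x - y‖) := by
            apply mul_le_mul_of_nonneg_left _ hε0.le
            apply mul_le_mul_of_nonneg_right _ hq0
            exact le_trans (hCpowD k) (hDpowmono k (k+1) (Nat.le_succ k))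
          have hb2 : C * (ε * k * D^k * ‖x - y‖) ≤ D^(k+1) * (ε * k * ‖x - y‖) := by
            have e : C * (ε * k * D^k * ‖x - y‖) = (C * D^k) * (ε * k * ‖x - y‖) := by ring
            have e2 : D^(k+1) = D * D^k := by rw [pow_succ]; ring
            rw [e, e2]
            apply mul_le_mul_of_nonneg_right
            · exact mul_le_mul_of_nonneg_right hCD hDk0
            · have : (0:ℝ) ≤ ε * k := mul_nonneg hε0.le (Nat.cast_nonneg k)
              exact mul_nonneg this hq0
          calc ‖O x (k+1) - O y (k+1) - P (k+1) (x - y)‖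
              = ‖(F n (k:ℤ) (O x k) - F n (k:ℤ) (O y k) - A0 k (O x k - O y k))
                + A0 k (O x k - O y k - P k (x - y))‖ := by rw [dec]
            _ ≤ ‖F n (k:ℤ) (O x k) - F n (k:ℤ) (O y k) - A0 k (O x k - O y k)‖
                + ‖A0 k (O x k - O y k - P k (x - y))‖ := norm_add_le _ _
            _ ≤ ε * (D^(k+1) * ‖x - y‖) + D^(k+1) * (ε * k * ‖x - y‖) := by
                have := add_le_add hfirst hsecond
                linarith
            _ ≤ ε * (k+1:ℕ) * D^(k+1) * ‖x - y‖ := by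
                have hcst : ((k+1:ℕ):ℝ) = (k:ℝ) + 1 := by push_cast; ring
                rw [hcst]
                have e : ε * ((k:ℝ)+1) * D^(k+1) * ‖x - y‖
                    = ε * (D^(k+1) * ‖x - y‖) + D^(k+1) * (ε * k * ‖x - y‖) := by ring
                rw [e]
        · calc ‖O x (k+1) - O y (k+1)‖
              = ‖F n (k:ℤ) (O x k) - F n (k:ℤ) (O y k)‖ := by rw [hOs, hOs]
            _ ≤ C * ‖O x k - O y k‖ := hlip k hk _ hOx _ hOy
            _ ≤ C * (C^k * ‖x - y‖) := mul_le_mul_of_nonneg_left IH2 hC0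
            _ = C^(k+1) * ‖x - y‖ := by rw [pow_succ]; ring
  -- the Newton operator
  obtain ⟨Nm, hNmdef⟩ : ∃ Nm : X → X, ∀ x, Nm x = x - Linv (x - O x θ) :=
    ⟨_, fun _ => rfl⟩
  have hNdiff : ∀ x y : X, Nm x - Nm y = Linv (O x θ - O y θ - Ξ (x - y)) := by
    intro x y
    have e0 : (x - y) - Ξ (x - y) = ((1 : X →L[ℂ] X) - Ξ) (x - y) := by
      simp [ContinuousLinearMap.sub_apply]
    calc Nm x - Nm y = (x - y) - Linv ((x - O x θ) - (y - O y θ)) := by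
          rw [hNmdef, hNmdef]
          simp only [map_sub]
          abel
      _ = Linv ((x - y) - Ξ (x - y)) - Linv ((x - O x θ) - (y - O y θ)) := by
          rw [e0, hLi1]
      _ = Linv (((x - y) - Ξ (x - y)) - ((x - O x θ) - (y - O y θ))) := (map_sub _ _ _).symm
      _ = Linv (O x θ - O y θ - Ξ (x - y)) := by congr 1; abel
  have hNlip : ∀ x y : X, ‖x - φ0 0‖ ≤ ρ₀ → ‖y - φ0 0‖ ≤ ρ₀ →
      ‖Nm x - Nm y‖ ≤ (1/2) * ‖x - y‖ := by
    intro x y hx hy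
    have h1 := (keyB θ le_rfl x y hx hy).1
    calc ‖Nm x - Nm y‖ = ‖Linv (O x θ - O y θ - Ξ (x - y))‖ := by rw [hNdiff]
      _ ≤ M * ‖O x θ - O y θ - P θ (x - y)‖ := hMx _
      _ ≤ M * (ε * θ * D^θ * ‖x - y‖) := mul_le_mul_of_nonneg_left h1 hM0.le
      _ = (M * (ε * ((θ:ℝ) * D^θ))) * ‖x - y‖ := by ring
      _ ≤ (1/2) * ‖x - y‖ := mul_le_mul_of_nonneg_right hεM (norm_nonneg _)
  have hφθ0 : φ0 ((θ:ℕ):ℤ) = φ0 0 := by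
    have := hφθ 0
    simpa using this
  have hNc : ‖Nm (φ0 0) - φ0 0‖ ≤ M * (D^θ * ((θ:ℝ)*γ)) := by
    have hc0 : ‖φ0 0 - φ0 0‖ ≤ ρ₀ := by simp [hρ₀0.le]
    have h1 := keyA θ le_rfl (φ0 0) hc0
    rw [hφθ0] at h1
    have h2 : ‖φ0 0 - φ0 0‖ = 0 := by simp
    rw [h2, zero_add] at h1
    calc ‖Nm (φ0 0) - φ0 0‖ = ‖-(Linv (φ0 0 - O (φ0 0) θ))‖ := by
          rw [hNmdef]
          congr 1
          abel
      _ = ‖Linv (φ0 0 - O (φ0 0) θ)‖ := norm_neg _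
      _ ≤ M * ‖φ0 0 - O (φ0 0) θ‖ := hMx _
      _ = M * ‖O (φ0 0) θ - φ0 0‖ := by rw [norm_sub_rev]
      _ ≤ M * (D^θ * ((θ:ℝ)*γ)) := mul_le_mul_of_nonneg_left h1 hM0.le
  have hNcρ : ‖Nm (φ0 0) - φ0 0‖ ≤ ρ₀/2 := by
    have hc := (le_div_iff₀ (by positivity)).mp hγ1
    have h2 : 2*M*(D^θ)*(θ:ℝ) ≤ 2*M*(D^θ)*((θ:ℝ)+1) :=
      mul_le_mul_of_nonneg_left (by linarith) (by positivity)
    have h3 : γ * (2*M*(D^θ)*(θ:ℝ)) ≤ γ * (2*M*(D^θ)*((θ:ℝ)+1)) :=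
      mul_le_mul_of_nonneg_left h2 hγ0
    have h4 : M * (D^θ * ((θ:ℝ)*γ)) = γ * (2*M*(D^θ)*(θ:ℝ))/2 := by ring
    linarith
  have hNball : ∀ x : X, ‖x - φ0 0‖ ≤ ρ₀ → ‖Nm x - φ0 0‖ ≤ ρ₀ := by
    intro x hx
    have hc0 : ‖φ0 0 - φ0 0‖ ≤ ρ₀ := by simp [hρ₀0.le]
    have h1 := hNlip x (φ0 0) hx hc0
    calc ‖Nm x - φ0 0‖ = ‖(Nm x - Nm (φ0 0)) + (Nm (φ0 0) - φ0 0)‖ := by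
          rw [sub_add_sub_cancel]
      _ ≤ ‖Nm x - Nm (φ0 0)‖ + ‖Nm (φ0 0) - φ0 0‖ := norm_add_le _ _
      _ ≤ (1/2) * ‖x - φ0 0‖ + ρ₀/2 := add_le_add h1 hNcρ
      _ ≤ ρ₀ := by linarith
  -- the fixed point in the closed ball
  haveI hBc : CompleteSpace (Metric.closedBall (φ0 0) ρ₀) :=
    Metric.isClosed_closedBall.completeSpace_coe
  haveI hBn : Nonempty (Metric.closedBall (φ0 0) ρ₀) :=
    ⟨⟨φ0 0, Metric.mem_closedBall_self hρ₀0.le⟩⟩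
  have hmemball : ∀ x : X, x ∈ Metric.closedBall (φ0 0) ρ₀ ↔ ‖x - φ0 0‖ ≤ ρ₀ := by
    intro x
    rw [Metric.mem_closedBall, dist_eq_norm]
  set fB : (Metric.closedBall (φ0 0) ρ₀) → (Metric.closedBall (φ0 0) ρ₀) :=
    fun x => ⟨Nm x.1, (hmemball _).mpr (hNball x.1 ((hmemball _).mp x.2))⟩ with hfB
  have hcontr : ContractingWith (1/2 : NNReal) fB := by
    constructor
    · rw [← NNReal.coe_lt_coe]
      norm_num
    · apply LipschitzWith.of_dist_le_mul
      intro a b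
      rw [Subtype.dist_eq, Subtype.dist_eq, dist_eq_norm, dist_eq_norm]
      have := hNlip a.1 b.1 ((hmemball _).mp a.2) ((hmemball _).mp b.2)
      calc ‖Nm a.1 - Nm b.1‖ ≤ (1/2) * ‖a.1 - b.1‖ := this
        _ = ((1/2 : NNReal) : ℝ) * ‖a.1 - b.1‖ := by push_cast; ring
  set ξ : X := (ContractingWith.fixedPoint fB hcontr : Metric.closedBall (φ0 0) ρ₀).1 with hξ
  have hξmem : ‖ξ - φ0 0‖ ≤ ρ₀ :=
    (hmemball _).mp (ContractingWith.fixedPoint fB hcontr).2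
  have hξfix : Nm ξ = ξ := by
    have := hcontr.fixedPoint_isFixedPt
    exact congrArg Subtype.val this
  have hOξ : O ξ θ = ξ := by
    have h1 : Linv (ξ - O ξ θ) = 0 := by
      have h0 := hξfix
      rw [hNmdef] at h0
      have := sub_eq_self.mp h0
      exact this
    have h2 := hLi2 (ξ - O ξ θ)
    rw [h1, map_zero] at h2
    have h3 : ξ - O ξ θ = 0 := h2.symm
    have := sub_eq_zero.mp h3
    exact this.symm
  have hξerr : ‖ξ - φ0 0‖ ≤ 2 * (M * (D^θ * ((θ:ℝ)*γ))) := by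
    have hc0 : ‖φ0 0 - φ0 0‖ ≤ ρ₀ := by simp [hρ₀0.le]
    have h1 := hNlip ξ (φ0 0) hξmem hc0
    have h2 : ‖ξ - φ0 0‖ ≤ ‖Nm ξ - Nm (φ0 0)‖ + ‖Nm (φ0 0) - φ0 0‖ := by
      have e : ξ - φ0 0 = (Nm ξ - Nm (φ0 0)) + (Nm (φ0 0) - φ0 0) := by
        rw [hξfix]; abel
      rw [e]
      exact norm_add_le _ _
    linarith
  -- θ-periodicity of the orbit of the fixed point
  have hOper : ∀ k : ℕ, O ξ (k + θ) = O ξ k := by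
    intro k
    induction k with
    | zero => simpa [hO0] using hOξ
    | succ k ih =>
        have e : k + 1 + θ = (k + θ) + 1 := by omega
        have e2 : ((k+θ:ℕ):ℤ) = (k:ℤ) + (θ:ℤ) := by push_cast; ring
        rw [e, hOs, hOs, ih, e2, hFθ n (k:ℤ)]
  -- the perturbed periodic solution
  obtain ⟨φn, hφndef⟩ : ∃ f : ℤ → X, ∀ t : ℤ, f t = O ξ ((t % (θ:ℤ)).toNat) :=
    ⟨_, fun _ => rfl⟩
  have hresmod : ∀ j : ℕ, j < θ → (((j:ℤ) % (θ:ℤ)).toNat) = j := by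
    intro j hj
    have h1 : (j:ℤ) % (θ:ℤ) = (j:ℤ) :=
      Int.emod_eq_of_lt (Int.natCast_nonneg j) (by exact_mod_cast hj)
    rw [h1, Int.toNat_natCast]
  have hφnj : ∀ j : ℕ, j < θ → φn (j:ℤ) = O ξ j := by
    intro j hj
    rw [hφndef, hresmod j hj]
  -- the uniform closeness estimate (2.9)
  have hest : ∀ t : ℤ, ‖φn t - φ0 t‖ ≤ K₀ * γ := by
    intro t
    have hr := hreslt t
    have h1 := keyA _ hr.le ξ hξmem
    have h2 : ‖ξ - φ0 0‖ + (((t % (θ:ℤ)).toNat : ℕ):ℝ)*γ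
        ≤ 2*(M*(D^θ*((θ:ℝ)*γ))) + (θ:ℝ)*γ := by
      apply add_le_add hξerr
      apply mul_le_mul_of_nonneg_right _ hγ0
      exact_mod_cast hr.le
    have h2' : 0 ≤ ‖ξ - φ0 0‖ + (((t % (θ:ℤ)).toNat : ℕ):ℝ)*γ :=
      add_nonneg (norm_nonneg _) (mul_nonneg (Nat.cast_nonneg _) hγ0)
    have h3 : D^((t % (θ:ℤ)).toNat) * (‖ξ - φ0 0‖ + (((t % (θ:ℤ)).toNat : ℕ):ℝ)*γ)
        ≤ D^θ * (2*(M*(D^θ*((θ:ℝ)*γ))) + (θ:ℝ)*γ) :=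
      mul_le_mul (hDpowmono _ θ hr.le) h2 h2' (by positivity)
    have h4 : D^θ * (2*(M*(D^θ*((θ:ℝ)*γ))) + (θ:ℝ)*γ) = K₀ * γ := by
      rw [hK₀]; ring
    calc ‖φn t - φ0 t‖ = ‖O ξ ((t % (θ:ℤ)).toNat) - φ0 (((t % (θ:ℤ)).toNat : ℕ):ℤ)‖ := by
          rw [hφndef, hφres t]
      _ ≤ D^((t % (θ:ℤ)).toNat) * (‖ξ - φ0 0‖ + (((t % (θ:ℤ)).toNat : ℕ):ℝ)*γ) := h1
      _ ≤ K₀ * γ := by rw [← h4]; exact h3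
  have hK₀ρ : K₀ * γ ≤ ρ₀ := by
    have hc : γ * (K₀ + 1) ≤ ρ₀ := (le_div_iff₀ (by positivity)).mp hγ2
    have he : γ * (K₀ + 1) = γ * K₀ + γ := by ring
    have hcomm : K₀ * γ = γ * K₀ := mul_comm _ _
    linarith
  refine ⟨φn, ?_, ?_, ?_, ?_, ?_, ?_, ?_⟩
  · -- membership in the domains
    intro t
    rw [hUres t, hφndef]
    exact (hpack _ (hreslt t)).1 (hball _ (hreslt t) ξ hξmem)
  · -- solution property
    intro t
    set r : ℕ := (t % (θ:ℤ)).toNat with hrdef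
    have hr : r < θ := hreslt t
    have hEq := Int.mul_ediv_add_emod t (θ:ℤ)
    have hrt : ((r:ℕ):ℤ) = t % θ := hres t
    have h1 : t + 1 = ((r:ℤ)+1) + (θ:ℤ)*(t/(θ:ℤ)) := by
      rw [hrt]; linarith
    have e1 : (t+1) % (θ:ℤ) = ((r:ℤ)+1) % (θ:ℤ) := by
      rw [h1]
      exact Int.add_mul_emod_self_left _ _ _
    have e2 : (((r:ℤ)+1) % (θ:ℤ)).toNat = (r+1) % θ := by
      have h5 : ((r:ℤ)+1) % (θ:ℤ) = (((r+1) % θ : ℕ) : ℤ) := by push_cast; ring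
      rw [h5, Int.toNat_natCast]
    have hOr1 : O ξ ((r+1) % θ) = F n (r:ℤ) (O ξ r) := by
      by_cases hcase : r + 1 < θ
      · rw [Nat.mod_eq_of_lt hcase, hOs]
      · have hcase' : r + 1 = θ := by omega
        rw [hcase', Nat.mod_self, hO0]
        have h6 : O ξ θ = F n (r:ℤ) (O ξ r) := by rw [← hcase']; exact hOs ξ r
        exact hOξ.symm.trans h6
    have hFeq : F n t = F n ((r:ℕ):ℤ) := hFres n t
    calc φn (t+1) = O ξ (((t+1) % (θ:ℤ)).toNat) := hφndef _
      _ = O ξ ((r+1) % θ) := by rw [e1, e2]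
      _ = F n (r:ℤ) (O ξ r) := hOr1
      _ = F n t (φn t) := by rw [hφndef t, ← hrdef, hFeq]
  · -- θ-periodicity
    intro t
    rw [hφndef, hφndef]
    have e : (t + (θ:ℤ)) % (θ:ℤ) = t % (θ:ℤ) := by
      rw [show t + (θ:ℤ) = t + (θ:ℤ)*1 by ring]
      exact Int.add_mul_emod_self_left _ _ _
    rw [e]
  · -- closeness to φ0
    intro t
    exact le_trans (hest t) hK₀ρ
  · -- uniqueness
    intro ψ hψmem hψsol hψper hψρ
    have hψO : ∀ k : ℕ, ψ (k:ℤ) = O (ψ 0) k := by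
      intro k
      induction k with
      | zero => simp [hO0]
      | succ k ih =>
          have hcast : ((k+1:ℕ):ℤ) = (k:ℤ) + 1 := by push_cast; ring
          rw [hcast, hψsol (k:ℤ), hOs, ← ih]
    have hψ0ball : ψ 0 ∈ Metric.closedBall (φ0 0) ρ₀ := (hmemball _).mpr (hψρ 0)
    have hψfix : O (ψ 0) θ = ψ 0 := by
      rw [← hψO θ]
      simpa using hψper 0
    have hNψ : Nm (ψ 0) = ψ 0 := by
      rw [hNmdef, hψfix, sub_self, map_zero, sub_zero]
    have hψξ : ψ 0 = ξ := by
      have hfa : fB ⟨ψ 0, hψ0ball⟩ = ⟨ψ 0, hψ0ball⟩ := Subtype.ext hNψ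
      exact congrArg Subtype.val (hcontr.fixedPoint_unique hfa)
    funext t
    have hψres : ψ t = ψ (((t % (θ:ℤ)).toNat : ℕ):ℤ) := by
      have h1 := zperiodic_mod ψ θ hψper t
      rw [← hres t] at h1
      exact h1
    calc ψ t = ψ (((t % (θ:ℤ)).toNat : ℕ):ℤ) := hψres
      _ = O (ψ 0) ((t % (θ:ℤ)).toNat) := hψO _
      _ = O ξ ((t % (θ:ℤ)).toNat) := by rw [hψξ]
      _ = φn t := (hφndef t).symm
  · -- convergence estimate
    intro t
    exact hest t
  · -- hyperbolicity of the perturbed solution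
    have hPnsucc : ∀ k : ℕ, prodOp (fun t => fderiv ℂ (F n t) (φn t)) (k+1)
        = (fderiv ℂ (F n (k:ℤ)) (φn (k:ℤ))).comp
          (prodOp (fun t => fderiv ℂ (F n t) (φn t)) k) := fun k => rfl
    have hBA : ∀ j : ℕ, j < θ → ‖fderiv ℂ (F n (j:ℤ)) (φn (j:ℤ)) - A0 j‖ ≤ ε := by
      intro j hj
      rw [hφnj j hj]
      exact (hpack j hj).2 n (hnN j hj) _ (hball j hj ξ hξmem)
    have claimP : ∀ k : ℕ, k ≤ θ →
        ‖prodOp (fun t => fderiv ℂ (F n t) (φn t)) k - P k‖ ≤ ε * k * D^k ∧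
        ‖prodOp (fun t => fderiv ℂ (F n t) (φn t)) k‖ ≤ D^k := by
      intro k
      induction k with
      | zero =>
          intro _
          constructor
          · have : prodOp (fun t => fderiv ℂ (F n t) (φn t)) 0 - P 0 = 0 := sub_self _
            rw [this]
            simp
          · calc ‖prodOp (fun t => fderiv ℂ (F n t) (φn t)) 0‖
                = ‖ContinuousLinearMap.id ℂ X‖ := rfl
              _ ≤ 1 := ContinuousLinearMap.norm_id_le
              _ = D^0 := by norm_num
      | succ k ih =>
          intro hk1
          have hk : k < θ := hk1
          obtain ⟨IH1, IH2⟩ := ih hk.le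
          have hDk0 : (0:ℝ) ≤ D^k := pow_nonneg hD0.le k
          have hBnorm : ‖fderiv ℂ (F n (k:ℤ)) (φn (k:ℤ))‖ ≤ D := by
            have h1 : ‖fderiv ℂ (F n (k:ℤ)) (φn (k:ℤ))‖
                ≤ ‖fderiv ℂ (F n (k:ℤ)) (φn (k:ℤ)) - A0 k‖ + ‖A0 k‖ := by
              have := norm_add_le (fderiv ℂ (F n (k:ℤ)) (φn (k:ℤ)) - A0 k) (A0 k)
              rw [sub_add_cancel] at this
              exact this
            have h2 := hBA k hk
            have h3 := hCA k hk
            have := hε1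
            linarith
          have dec : prodOp (fun t => fderiv ℂ (F n t) (φn t)) (k+1) - P (k+1)
              = ((fderiv ℂ (F n (k:ℤ)) (φn (k:ℤ))) - A0 k).comp
                  (prodOp (fun t => fderiv ℂ (F n t) (φn t)) k)
                + (A0 k).comp (prodOp (fun t => fderiv ℂ (F n t) (φn t)) k - P k) := by
            rw [hPnsucc, hPsucc]
            simp only [ContinuousLinearMap.sub_comp, ContinuousLinearMap.comp_sub]
            abel
          constructor
          · have hb1 : ‖((fderiv ℂ (F n (k:ℤ)) (φn (k:ℤ))) - A0 k).comp
                (prodOp (fun t => fderiv ℂ (F n t) (φn t)) k)‖ ≤ ε * D^k :=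
              le_trans (ContinuousLinearMap.opNorm_comp_le _ _)
                (mul_le_mul (hBA k hk) IH2 (norm_nonneg _) hε0.le)
            have hb2 : ‖(A0 k).comp (prodOp (fun t => fderiv ℂ (F n t) (φn t)) k - P k)‖
                ≤ C * (ε * k * D^k) :=
              le_trans (ContinuousLinearMap.opNorm_comp_le _ _)
                (mul_le_mul (by linarith [hCA k hk]) IH1 (norm_nonneg _) hC0)
            have hb3 : ε * D^k ≤ ε * D^(k+1) :=
              mul_le_mul_of_nonneg_left (hDpowmono k (k+1) (Nat.le_succ k)) hε0.le
            have hb4 : C * (ε * k * D^k) ≤ D^(k+1) * (ε * k) := by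
              have e : C * (ε * k * D^k) = (C * D^k) * (ε * k) := by ring
              have e2 : D^(k+1) = D * D^k := by rw [pow_succ]; ring
              rw [e, e2]
              exact mul_le_mul_of_nonneg_right (mul_le_mul_of_nonneg_right hCD hDk0)
                (mul_nonneg hε0.le (Nat.cast_nonneg k))
            have hcst : ((k+1:ℕ):ℝ) = (k:ℝ) + 1 := by push_cast; ring
            calc ‖prodOp (fun t => fderiv ℂ (F n t) (φn t)) (k+1) - P (k+1)‖
                ≤ ‖((fderiv ℂ (F n (k:ℤ)) (φn (k:ℤ))) - A0 k).comp
                    (prodOp (fun t => fderiv ℂ (F n t) (φn t)) k)‖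
                  + ‖(A0 k).comp (prodOp (fun t => fderiv ℂ (F n t) (φn t)) k - P k)‖ := by
                  rw [dec]; exact norm_add_le _ _
              _ ≤ ε * D^(k+1) + D^(k+1) * (ε * k) := by linarith
              _ = ε * (k+1:ℕ) * D^(k+1) := by rw [hcst]; ring
          · calc ‖prodOp (fun t => fderiv ℂ (F n t) (φn t)) (k+1)‖
                ≤ ‖fderiv ℂ (F n (k:ℤ)) (φn (k:ℤ))‖
                  * ‖prodOp (fun t => fderiv ℂ (F n t) (φn t)) k‖ := by
                  rw [hPnsucc]; exact ContinuousLinearMap.opNorm_comp_le _ _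
              _ ≤ D * D^k := mul_le_mul hBnorm IH2 (norm_nonneg _) hD0.le
              _ = D^(k+1) := by rw [pow_succ]; ring
    have hΞn : ‖prodOp (fun t => fderiv ℂ (F n t) (φn t)) θ - Ξ‖ < η := by
      have h1 := (claimP θ le_rfl).1
      have h2 : ε * (θ:ℝ) * D^θ = ε * ((θ:ℝ) * D^θ) := by ring
      rw [h2] at h1
      exact lt_of_le_of_lt h1 hεη
    rw [Set.eq_empty_iff_forall_notMem]
    rintro z ⟨hz1, hz2⟩
    have hz2' : ‖z‖ = 1 := hz2
    have hu := hηP _ hΞn z hz2'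
    exact (spectrum.notMem_iff.mpr hu) hz1
end
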